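/- arXiv:2012.09513 — 3 statements merged into one kernel-verified Lean document; each statement's English description precedes it below -/
import Mathlib

section
/- Let X, Y, Z be independent random vectors in ℝ^d. Define ζ := sup_{r∈ℝ^d} |P(X ≤ r) − P(Y ≤ r)|, γ := sup_{r∈ℝ^d} |P(X+Z ≤ r) − P(Y+Z ≤ r)|, and for ε > 0 let α := P(‖Z‖_∞ ≤ ε) and τ := sup_{r∈ℝ^d} |P(Y ≤ r + 2ε·1) − P(Y ≤ r)|, where 1 is the all-ones vector. If α > 1/2, then ζ ≤ (γ + ατ)/(2α − 1). -/
open MeasureTheory ProbabilityTheory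

namespace Stmt3Aux

variable {d : ℕ}

lemma measurableSet_Ls (r : Fin d → ℝ) :
    MeasurableSet {x : Fin d → ℝ | ∀ j, x j ≤ r j} := by
  have h : {x : Fin d → ℝ | ∀ j, x j ≤ r j} = ⋂ j, {x | x j ≤ r j} := by ext; simp
  rw [h]
  exact MeasurableSet.iInter fun j =>
    measurableSet_le (measurable_pi_apply j) measurable_const

lemma measurableSet_A (ε : ℝ) :
    MeasurableSet {z : Fin d → ℝ | ∀ j, |z j| ≤ ε} := by
  have h : {z : Fin d → ℝ | ∀ j, |z j| ≤ ε} = ⋂ j, {z | |z j| ≤ ε} := by ext; simp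
  rw [h]
  exact MeasurableSet.iInter fun j =>
    measurableSet_le ((measurable_pi_apply j).abs) measurable_const

lemma measurableSet_S (t : Fin d → ℝ) :
    MeasurableSet {p : (Fin d → ℝ) × (Fin d → ℝ) | ∀ j, p.2 j + p.1 j ≤ t j} := by
  have h : {p : (Fin d → ℝ) × (Fin d → ℝ) | ∀ j, p.2 j + p.1 j ≤ t j}
      = ⋂ j, {p | p.2 j + p.1 j ≤ t j} := by ext; simp
  rw [h]
  exact MeasurableSet.iInter fun j =>
    measurableSet_le (by fun_prop) measurable_const

lemma split {Ω : Type*} [MeasurableSpace Ω] (μ : Measure Ω) [IsProbabilityMeasure μ]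
    (V Z : Ω → Fin d → ℝ) (hV : Measurable V) (hZ : Measurable Z)
    (hind : IndepFun Z V μ) (t : Fin d → ℝ) (B : Set (Fin d → ℝ)) (hB : MeasurableSet B) :
    μ ({ω | ∀ j, V ω j + Z ω j ≤ t j} ∩ {ω | Z ω ∈ B})
      = ∫⁻ z in B, (μ.map V) {x | ∀ j, x j + z j ≤ t j} ∂(μ.map Z) := by
  have hprod : μ.map (fun ω => (Z ω, V ω)) = (μ.map Z).prod (μ.map V) :=
    (indepFun_iff_map_prod_eq_prod_map_map hZ.aemeasurable hV.aemeasurable).mp hind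
  set S : Set ((Fin d → ℝ) × (Fin d → ℝ)) :=
    {p | (∀ j, p.2 j + p.1 j ≤ t j) ∧ p.1 ∈ B} with hS
  have hSm : MeasurableSet S := (measurableSet_S t).inter (hB.preimage measurable_fst)
  have h1 : μ ({ω | ∀ j, V ω j + Z ω j ≤ t j} ∩ {ω | Z ω ∈ B})
      = μ.map (fun ω => (Z ω, V ω)) S := by
    rw [Measure.map_apply (hZ.prodMk hV) hSm]
    rfl
  haveI : IsProbabilityMeasure (μ.map V) := Measure.isProbabilityMeasure_map hV.aemeasurable
  rw [h1, hprod, Measure.prod_apply hSm]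
  have h2 : ∀ z, (μ.map V) (Prod.mk z ⁻¹' S)
      = B.indicator (fun z => (μ.map V) {x | ∀ j, x j + z j ≤ t j}) z := by
    intro z
    by_cases hz : z ∈ B
    · rw [Set.indicator_of_mem hz]
      congr 1
      ext x
      simp [hS, hz]
    · rw [Set.indicator_of_notMem hz]
      have : Prod.mk z ⁻¹' S = ∅ := by
        ext x; simp [hS, hz]
      simp [this]
  simp only [h2]
  rw [lintegral_indicator hB]

lemma cdf_meas (κ : Measure (Fin d → ℝ)) [SFinite κ] (t : Fin d → ℝ) :
    Measurable fun z : Fin d → ℝ => κ {x | ∀ j, x j + z j ≤ t j} := by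
  have h := measurable_measure_prodMk_left (ν := κ) (measurableSet_S t)
  exact h

lemma cdf_le_one (κ : Measure (Fin d → ℝ)) [IsProbabilityMeasure κ] (s : Set (Fin d → ℝ)) :
    (κ s).toReal ≤ 1 := by
  have h := prob_le_one (μ := κ) (s := s)
  calc (κ s).toReal ≤ (1 : ENNReal).toReal := ENNReal.toReal_mono ENNReal.one_ne_top h
    _ = 1 := by simp

lemma integrable_cdf (ν κ : Measure (Fin d → ℝ)) [IsProbabilityMeasure ν]
    [IsProbabilityMeasure κ] (t : Fin d → ℝ) (B : Set (Fin d → ℝ)) :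
    Integrable (fun z => (κ {x | ∀ j, x j + z j ≤ t j}).toReal) (ν.restrict B) := by
  refine Integrable.mono' (integrable_const 1)
    ((cdf_meas κ t).ennreal_toReal.aestronglyMeasurable) ?_
  filter_upwards with z
  rw [Real.norm_eq_abs, abs_of_nonneg ENNReal.toReal_nonneg]
  exact cdf_le_one κ _

lemma split_toReal {Ω : Type*} [MeasurableSpace Ω] (μ : Measure Ω) [IsProbabilityMeasure μ]
    (V Z : Ω → Fin d → ℝ) (hV : Measurable V) (hZ : Measurable Z)
    (hind : IndepFun Z V μ) (t : Fin d → ℝ) (B : Set (Fin d → ℝ)) (hB : MeasurableSet B) :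
    (μ ({ω | ∀ j, V ω j + Z ω j ≤ t j} ∩ {ω | Z ω ∈ B})).toReal
      = ∫ z in B, ((μ.map V) {x | ∀ j, x j + z j ≤ t j}).toReal ∂(μ.map Z) := by
  haveI : IsProbabilityMeasure (μ.map V) := Measure.isProbabilityMeasure_map hV.aemeasurable
  haveI : IsProbabilityMeasure (μ.map Z) := Measure.isProbabilityMeasure_map hZ.aemeasurable
  rw [split μ V Z hV hZ hind t B hB]
  rw [← integral_toReal ((cdf_meas (μ.map V) t).aemeasurable.restrict)]
  filter_upwards with z
  exact lt_of_le_of_lt (prob_le_one) ENNReal.one_lt_top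

lemma Hdecomp {Ω : Type*} [MeasurableSpace Ω] (μ : Measure Ω) [IsProbabilityMeasure μ]
    (V Z : Ω → Fin d → ℝ) (hV : Measurable V) (hZ : Measurable Z)
    (hind : IndepFun Z V μ) (t : Fin d → ℝ) (ε : ℝ) :
    (μ {ω | ∀ j, V ω j + Z ω j ≤ t j}).toReal
      = (∫ z in {z : Fin d → ℝ | ∀ j, |z j| ≤ ε},
           ((μ.map V) {x | ∀ j, x j + z j ≤ t j}).toReal ∂(μ.map Z))
        + ∫ z in {z : Fin d → ℝ | ∀ j, |z j| ≤ ε}ᶜ,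
           ((μ.map V) {x | ∀ j, x j + z j ≤ t j}).toReal ∂(μ.map Z) := by
  set A : Set (Fin d → ℝ) := {z | ∀ j, |z j| ≤ ε} with hA
  have hAm : MeasurableSet A := measurableSet_A ε
  set s : Set Ω := {ω | ∀ j, V ω j + Z ω j ≤ t j} with hs
  have hdiff : s \ (Z ⁻¹' A) = s ∩ {ω | Z ω ∈ Aᶜ} := by
    rw [Set.diff_eq]; rfl
  have key : μ (s ∩ {ω | Z ω ∈ A}) + μ (s ∩ {ω | Z ω ∈ Aᶜ}) = μ s := by
    rw [← hdiff]
    exact measure_inter_add_diff s (hAm.preimage hZ)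
  rw [← split_toReal μ V Z hV hZ hind t A hAm,
    ← split_toReal μ V Z hV hZ hind t Aᶜ hAm.compl,
    ← ENNReal.toReal_add (measure_ne_top _ _) (measure_ne_top _ _), key]

lemma lint_ne_top (ν κ : Measure (Fin d → ℝ)) [IsProbabilityMeasure ν]
    [IsProbabilityMeasure κ] (t : Fin d → ℝ) (B : Set (Fin d → ℝ)) :
    ∫⁻ z in B, κ {x | ∀ j, x j + z j ≤ t j} ∂ν ≠ ⊤ := by
  have h : ∫⁻ z in B, κ {x | ∀ j, x j + z j ≤ t j} ∂ν ≤ ∫⁻ _ in B, 1 ∂ν :=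
    lintegral_mono fun z => prob_le_one
  refine ne_top_of_le_ne_top ?_ h
  rw [setLIntegral_one]
  exact measure_ne_top _ _

lemma int_eq_lint (ν κ : Measure (Fin d → ℝ)) [IsProbabilityMeasure ν]
    [IsProbabilityMeasure κ] (t : Fin d → ℝ) (B : Set (Fin d → ℝ)) :
    ∫ z in B, (κ {x | ∀ j, x j + z j ≤ t j}).toReal ∂ν
      = (∫⁻ z in B, κ {x | ∀ j, x j + z j ≤ t j} ∂ν).toReal := by
  rw [← integral_toReal ((cdf_meas κ t).aemeasurable.restrict)]
  filter_upwards with z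
  exact lt_of_le_of_lt prob_le_one ENNReal.one_lt_top

lemma intA_lower (ν κ : Measure (Fin d → ℝ)) [IsProbabilityMeasure ν] [IsProbabilityMeasure κ]
    (t : Fin d → ℝ) (B : Set (Fin d → ℝ)) (hB : MeasurableSet B) (s : Set (Fin d → ℝ))
    (hsub : ∀ z ∈ B, s ⊆ {x | ∀ j, x j + z j ≤ t j}) :
    (ν B).toReal * (κ s).toReal
      ≤ ∫ z in B, (κ {x | ∀ j, x j + z j ≤ t j}).toReal ∂ν := by
  have h1 : ν B * κ s ≤ ∫⁻ z in B, κ {x | ∀ j, x j + z j ≤ t j} ∂ν := by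
    calc ν B * κ s = ∫⁻ _ in B, κ s ∂ν := by rw [setLIntegral_const, mul_comm]
    _ ≤ _ := setLIntegral_mono' hB fun z hz => measure_mono (hsub z hz)
  rw [int_eq_lint, ← ENNReal.toReal_mul]
  exact ENNReal.toReal_mono (lint_ne_top ν κ t B) h1

lemma intA_upper (ν κ : Measure (Fin d → ℝ)) [IsProbabilityMeasure ν] [IsProbabilityMeasure κ]
    (t : Fin d → ℝ) (B : Set (Fin d → ℝ)) (hB : MeasurableSet B) (s : Set (Fin d → ℝ))
    (hsub : ∀ z ∈ B, {x | ∀ j, x j + z j ≤ t j} ⊆ s) :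
    ∫ z in B, (κ {x | ∀ j, x j + z j ≤ t j}).toReal ∂ν
      ≤ (ν B).toReal * (κ s).toReal := by
  have h1 : ∫⁻ z in B, κ {x | ∀ j, x j + z j ≤ t j} ∂ν ≤ ν B * κ s := by
    calc ∫⁻ z in B, κ {x | ∀ j, x j + z j ≤ t j} ∂ν
        ≤ ∫⁻ _ in B, κ s ∂ν := setLIntegral_mono' hB fun z hz => measure_mono (hsub z hz)
      _ = ν B * κ s := by rw [setLIntegral_const, mul_comm]
  rw [int_eq_lint, ← ENNReal.toReal_mul]
  refine ENNReal.toReal_mono ?_ h1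
  exact ENNReal.mul_ne_top (measure_ne_top _ _) (measure_ne_top _ _)

lemma intDiff (ν κX κY : Measure (Fin d → ℝ)) [IsProbabilityMeasure ν]
    [IsProbabilityMeasure κX] [IsProbabilityMeasure κY]
    (t : Fin d → ℝ) (B : Set (Fin d → ℝ)) (hB : MeasurableSet B) (c : ℝ)
    (hc : ∀ z : Fin d → ℝ, |(κX {x | ∀ j, x j + z j ≤ t j}).toReal
        - (κY {x | ∀ j, x j + z j ≤ t j}).toReal| ≤ c) :
    |(∫ z in B, (κX {x | ∀ j, x j + z j ≤ t j}).toReal ∂ν)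
        - ∫ z in B, (κY {x | ∀ j, x j + z j ≤ t j}).toReal ∂ν|
      ≤ (ν B).toReal * c := by
  rw [← integral_sub (integrable_cdf ν κX t B) (integrable_cdf ν κY t B)]
  have h1 : |∫ z in B, ((κX {x | ∀ j, x j + z j ≤ t j}).toReal
      - (κY {x | ∀ j, x j + z j ≤ t j}).toReal) ∂ν|
      ≤ ∫ z in B, |(κX {x | ∀ j, x j + z j ≤ t j}).toReal
      - (κY {x | ∀ j, x j + z j ≤ t j}).toReal| ∂ν := by
    simpa [Real.norm_eq_abs] using norm_integral_le_integral_norm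
      (μ := ν.restrict B) (fun z : Fin d → ℝ => (κX {x | ∀ j, x j + z j ≤ t j}).toReal
        - (κY {x | ∀ j, x j + z j ≤ t j}).toReal)
  refine h1.trans ?_
  have h2 : ∫ z in B, |(κX {x | ∀ j, x j + z j ≤ t j}).toReal
      - (κY {x | ∀ j, x j + z j ≤ t j}).toReal| ∂ν ≤ ∫ _ in B, c ∂ν := by
    refine setIntegral_mono_on
      ((integrable_cdf ν κX t B).sub (integrable_cdf ν κY t B)).abs
      (integrable_const c) hB fun z _ => hc z
  refine h2.trans ?_
  rw [setIntegral_const, smul_eq_mul]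
  exact le_rfl

lemma keygen {Ω : Type*} [MeasurableSpace Ω] (μ : Measure Ω) [IsProbabilityMeasure μ]
    (X Y Z : Ω → Fin d → ℝ) (hX : Measurable X) (hY : Measurable Y) (hZ : Measurable Z)
    (hZX : IndepFun Z X μ) (hZY : IndepFun Z Y μ) (ε c : ℝ)
    (hc : ∀ s : Fin d → ℝ, |((μ.map X) {x | ∀ j, x j ≤ s j}).toReal
        - ((μ.map Y) {x | ∀ j, x j ≤ s j}).toReal| ≤ c)
    (t rX rY : Fin d → ℝ)
    (hXsub : ∀ z : Fin d → ℝ, (∀ j, |z j| ≤ ε) →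
        ∀ x : Fin d → ℝ, (∀ j, x j ≤ rX j) → ∀ j, x j + z j ≤ t j)
    (hYsub : ∀ z : Fin d → ℝ, (∀ j, |z j| ≤ ε) →
        ∀ x : Fin d → ℝ, (∀ j, x j + z j ≤ t j) → ∀ j, x j ≤ rY j) :
    ((μ.map Z) {z | ∀ j, |z j| ≤ ε}).toReal * ((μ.map X) {x | ∀ j, x j ≤ rX j}).toReal
      - ((μ.map Z) {z | ∀ j, |z j| ≤ ε}).toReal * ((μ.map Y) {x | ∀ j, x j ≤ rY j}).toReal
      - (1 - ((μ.map Z) {z | ∀ j, |z j| ≤ ε}).toReal) * c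
    ≤ (μ {ω | ∀ j, X ω j + Z ω j ≤ t j}).toReal
      - (μ {ω | ∀ j, Y ω j + Z ω j ≤ t j}).toReal := by
  haveI : IsProbabilityMeasure (μ.map X) := Measure.isProbabilityMeasure_map hX.aemeasurable
  haveI : IsProbabilityMeasure (μ.map Y) := Measure.isProbabilityMeasure_map hY.aemeasurable
  haveI : IsProbabilityMeasure (μ.map Z) := Measure.isProbabilityMeasure_map hZ.aemeasurable
  set ν := μ.map Z
  set κX := μ.map X
  set κY := μ.map Y
  set A : Set (Fin d → ℝ) := {z | ∀ j, |z j| ≤ ε} with hAdef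
  have hAm : MeasurableSet A := measurableSet_A ε
  have hcompl : (ν Aᶜ).toReal = 1 - (ν A).toReal := by
    rw [prob_compl_eq_one_sub hAm, ENNReal.toReal_sub_of_le prob_le_one ENNReal.one_ne_top,
      ENNReal.toReal_one]
  have hshift : ∀ z : Fin d → ℝ, {x : Fin d → ℝ | ∀ j, x j + z j ≤ t j}
      = {x : Fin d → ℝ | ∀ j, x j ≤ t j - z j} := by
    intro z; ext x
    simp only [Set.mem_setOf_eq, le_sub_iff_add_le]
  have hc' : ∀ z : Fin d → ℝ, |(κX {x | ∀ j, x j + z j ≤ t j}).toReal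
      - (κY {x | ∀ j, x j + z j ≤ t j}).toReal| ≤ c := by
    intro z
    rw [hshift z]
    exact hc (fun j => t j - z j)
  have hdX := Hdecomp μ X Z hX hZ hZX t ε
  have hdY := Hdecomp μ Y Z hY hZ hZY t ε
  have hlowX := intA_lower ν κX t A hAm {x | ∀ j, x j ≤ rX j}
    (fun z hz x hx => hXsub z hz x hx)
  have hupY := intA_upper ν κY t A hAm {x | ∀ j, x j ≤ rY j}
    (fun z hz x hx => hYsub z hz x hx)
  have hdiff := intDiff ν κX κY t Aᶜ hAm.compl c hc'
  rw [abs_le] at hdiff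
  rw [hdX, hdY]
  rw [hcompl] at hdiff
  linarith [hdiff.1, hdiff.2]

lemma toReal_prob_le_one {Ω : Type*} [MeasurableSpace Ω] (μ : Measure Ω)
    [IsProbabilityMeasure μ] (s : Set Ω) : (μ s).toReal ≤ 1 := by
  calc (μ s).toReal ≤ (1 : ENNReal).toReal := ENNReal.toReal_mono ENNReal.one_ne_top prob_le_one
    _ = 1 := by simp

end Stmt3Aux

open Stmt3Aux


/-- Smoothing inequality.  For independent random vectors X, Y, Z in ℝ^d,
with ζ, γ, τ the Kolmogorov-type distances defined below and
α := P(‖Z‖_∞ ≤ ε) > 1/2, one has ζ ≤ (γ + ατ)/(2α − 1). -/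
theorem stmt3 {Ω : Type*} [MeasurableSpace Ω] (μ : Measure Ω) [IsProbabilityMeasure μ]
    {d : ℕ} (X Y Z : Ω → Fin d → ℝ)
    (hX : Measurable X) (hY : Measurable Y) (hZ : Measurable Z)
    (hindep : iIndepFun (m := fun _ : Fin 3 => (inferInstance : MeasurableSpace (Fin d → ℝ)))
      ![X, Y, Z] μ)
    (ε : ℝ) (hε : 0 < ε)
    (hα : 1 / 2 < (μ {ω | ∀ j, |Z ω j| ≤ ε}).toReal) :
    (⨆ r : Fin d → ℝ,
        |(μ {ω | ∀ j, X ω j ≤ r j}).toReal - (μ {ω | ∀ j, Y ω j ≤ r j}).toReal|)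
      ≤ ((⨆ r : Fin d → ℝ,
            |(μ {ω | ∀ j, X ω j + Z ω j ≤ r j}).toReal
              - (μ {ω | ∀ j, Y ω j + Z ω j ≤ r j}).toReal|)
          + (μ {ω | ∀ j, |Z ω j| ≤ ε}).toReal *
            (⨆ r : Fin d → ℝ,
              |(μ {ω | ∀ j, Y ω j ≤ r j + 2 * ε}).toReal
                - (μ {ω | ∀ j, Y ω j ≤ r j}).toReal|))
        / (2 * (μ {ω | ∀ j, |Z ω j| ≤ ε}).toReal - 1) := by
  have hZX : IndepFun Z X μ := by
    have h := hindep.indepFun (i := 2) (j := 0) (by decide)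
    simpa using h
  have hZY : IndepFun Z Y μ := by
    have h := hindep.indepFun (i := 2) (j := 1) (by decide)
    simpa using h
  have hmapX : ∀ s : Fin d → ℝ,
      μ {ω | ∀ j, X ω j ≤ s j} = (μ.map X) {x | ∀ j, x j ≤ s j} :=
    fun s => (Measure.map_apply hX (measurableSet_Ls s)).symm
  have hmapY : ∀ s : Fin d → ℝ,
      μ {ω | ∀ j, Y ω j ≤ s j} = (μ.map Y) {x | ∀ j, x j ≤ s j} :=
    fun s => (Measure.map_apply hY (measurableSet_Ls s)).symm
  have hmapZA : μ {ω | ∀ j, |Z ω j| ≤ ε} = (μ.map Z) {z | ∀ j, |z j| ≤ ε} :=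
    (Measure.map_apply hZ (measurableSet_A ε)).symm
  have prob2 : ∀ s t : Set Ω, |(μ s).toReal - (μ t).toReal| ≤ 2 := by
    intro s t
    have h1 := toReal_prob_le_one μ s
    have h2 := toReal_prob_le_one μ t
    have h3 : (0:ℝ) ≤ (μ s).toReal := ENNReal.toReal_nonneg
    have h4 : (0:ℝ) ≤ (μ t).toReal := ENNReal.toReal_nonneg
    rw [abs_le]; constructor <;> linarith
  set α := (μ {ω | ∀ j, |Z ω j| ≤ ε}).toReal with hαdef
  set ζ := ⨆ r : Fin d → ℝ,
      |(μ {ω | ∀ j, X ω j ≤ r j}).toReal - (μ {ω | ∀ j, Y ω j ≤ r j}).toReal| with hζdef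
  set γ := ⨆ r : Fin d → ℝ,
      |(μ {ω | ∀ j, X ω j + Z ω j ≤ r j}).toReal
        - (μ {ω | ∀ j, Y ω j + Z ω j ≤ r j}).toReal| with hγdef
  set τ := ⨆ r : Fin d → ℝ,
      |(μ {ω | ∀ j, Y ω j ≤ r j + 2 * ε}).toReal
        - (μ {ω | ∀ j, Y ω j ≤ r j}).toReal| with hτdef
  have hbddζ : BddAbove (Set.range fun r : Fin d → ℝ =>
      |(μ {ω | ∀ j, X ω j ≤ r j}).toReal - (μ {ω | ∀ j, Y ω j ≤ r j}).toReal|) :=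
    ⟨2, by rintro x ⟨r, rfl⟩; exact prob2 _ _⟩
  have hbddγ : BddAbove (Set.range fun r : Fin d → ℝ =>
      |(μ {ω | ∀ j, X ω j + Z ω j ≤ r j}).toReal
        - (μ {ω | ∀ j, Y ω j + Z ω j ≤ r j}).toReal|) :=
    ⟨2, by rintro x ⟨r, rfl⟩; exact prob2 _ _⟩
  have hbddτ : BddAbove (Set.range fun r : Fin d → ℝ =>
      |(μ {ω | ∀ j, Y ω j ≤ r j + 2 * ε}).toReal
        - (μ {ω | ∀ j, Y ω j ≤ r j}).toReal|) :=
    ⟨2, by rintro x ⟨r, rfl⟩; exact prob2 _ _⟩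
  have hζ_pt : ∀ r : Fin d → ℝ,
      |(μ {ω | ∀ j, X ω j ≤ r j}).toReal - (μ {ω | ∀ j, Y ω j ≤ r j}).toReal| ≤ ζ :=
    fun r => by rw [hζdef]; exact le_ciSup hbddζ r
  have hγ_pt : ∀ r : Fin d → ℝ,
      |(μ {ω | ∀ j, X ω j + Z ω j ≤ r j}).toReal
        - (μ {ω | ∀ j, Y ω j + Z ω j ≤ r j}).toReal| ≤ γ :=
    fun r => by rw [hγdef]; exact le_ciSup hbddγ r
  have hτ_pt : ∀ r : Fin d → ℝ,
      |(μ {ω | ∀ j, Y ω j ≤ r j + 2 * ε}).toReal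
        - (μ {ω | ∀ j, Y ω j ≤ r j}).toReal| ≤ τ :=
    fun r => by rw [hτdef]; exact le_ciSup hbddτ r
  have hζ0 : 0 ≤ ζ := le_trans (abs_nonneg _) (hζ_pt (fun _ => 0))
  have hτ0 : 0 ≤ τ := le_trans (abs_nonneg _) (hτ_pt (fun _ => 0))
  have hα1 : α ≤ 1 := by rw [hαdef]; exact toReal_prob_le_one μ _
  have hα0 : (0:ℝ) < α := by linarith
  have hcXY : ∀ s : Fin d → ℝ, |((μ.map X) {x | ∀ j, x j ≤ s j}).toReal
      - ((μ.map Y) {x | ∀ j, x j ≤ s j}).toReal| ≤ ζ := by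
    intro s
    rw [← hmapX s, ← hmapY s]
    exact hζ_pt s
  have hcYX : ∀ s : Fin d → ℝ, |((μ.map Y) {x | ∀ j, x j ≤ s j}).toReal
      - ((μ.map X) {x | ∀ j, x j ≤ s j}).toReal| ≤ ζ := by
    intro s
    rw [abs_sub_comm]
    exact hcXY s
  have hαmap : α = ((μ.map Z) {z | ∀ j, |z j| ≤ ε}).toReal := by
    rw [hαdef, hmapZA]
  -- per-r estimate
  have hper : ∀ r : Fin d → ℝ,
      |(μ {ω | ∀ j, X ω j ≤ r j}).toReal - (μ {ω | ∀ j, Y ω j ≤ r j}).toReal|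
        ≤ (γ + α * τ + (1 - α) * ζ) / α := by
    intro r
    rw [le_div_iff₀ hα0]
    -- plus direction
    have hplus := keygen μ X Y Z hX hY hZ hZX hZY ε ζ hcXY
      (fun j => r j + ε) r (fun j => r j + 2 * ε)
      (by
        intro z hz x hx j
        have h := abs_le.mp (hz j)
        show x j + z j ≤ r j + ε
        linarith [hx j, h.2])
      (by
        intro z hz x hx j
        have h := abs_le.mp (hz j)
        have h2 : x j + z j ≤ r j + ε := hx j
        show x j ≤ r j + 2 * ε
        linarith [h.1])
    beta_reduce at hplus
    rw [← hαmap, ← hmapX r] at hplus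
    have hY2 := hmapY (fun j => r j + 2 * ε)
    beta_reduce at hY2
    rw [← hY2] at hplus
    have hγp := hγ_pt (fun j => r j + ε)
    beta_reduce at hγp
    rw [abs_le] at hγp
    have hτp := hτ_pt r
    rw [abs_le] at hτp
    -- minus direction
    have hminus := keygen μ Y X Z hY hX hZ hZY hZX ε ζ hcYX
      (fun j => r j - ε) (fun j => r j - 2 * ε) r
      (by
        intro z hz x hx j
        have h := abs_le.mp (hz j)
        have h2 : x j ≤ r j - 2 * ε := hx j
        show x j + z j ≤ r j - ε
        linarith [h.2])
      (by
        intro z hz x hx j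
        have h := abs_le.mp (hz j)
        have h2 : x j + z j ≤ r j - ε := hx j
        show x j ≤ r j
        linarith [h.1])
    beta_reduce at hminus
    rw [← hαmap, ← hmapX r] at hminus
    have hY3 := hmapY (fun j => r j - 2 * ε)
    beta_reduce at hY3
    rw [← hY3] at hminus
    have hγm := hγ_pt (fun j => r j - ε)
    beta_reduce at hγm
    rw [abs_le] at hγm
    have hτm := hτ_pt (fun j => r j - 2 * ε)
    beta_reduce at hτm
    have hsimp : {ω | ∀ j, Y ω j ≤ r j - 2 * ε + 2 * ε} = {ω | ∀ j, Y ω j ≤ r j} := by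
      ext ω
      constructor <;> intro h j <;> have := h j <;> linarith
    rw [hsimp, abs_le] at hτm
    -- multiplied tau bounds
    have hmul1 : α * (μ {ω | ∀ j, Y ω j ≤ r j + 2 * ε}).toReal
        ≤ α * ((μ {ω | ∀ j, Y ω j ≤ r j}).toReal + τ) :=
      mul_le_mul_of_nonneg_left (by linarith [hτp.2]) hα0.le
    have hmul2 : α * ((μ {ω | ∀ j, Y ω j ≤ r j}).toReal - τ)
        ≤ α * (μ {ω | ∀ j, Y ω j ≤ r j - 2 * ε}).toReal :=
      mul_le_mul_of_nonneg_left (by linarith [hτm.1]) hα0.le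
    have key1 : α * (μ {ω | ∀ j, X ω j ≤ r j}).toReal
        - α * (μ {ω | ∀ j, Y ω j ≤ r j}).toReal ≤ γ + α * τ + (1 - α) * ζ := by
      linarith [hplus, hγp.2, hmul1]
    have key2 : α * (μ {ω | ∀ j, Y ω j ≤ r j}).toReal
        - α * (μ {ω | ∀ j, X ω j ≤ r j}).toReal ≤ γ + α * τ + (1 - α) * ζ := by
      linarith [hminus, hγm.2, hmul2]
    rcases abs_cases ((μ {ω | ∀ j, X ω j ≤ r j}).toReal
        - (μ {ω | ∀ j, Y ω j ≤ r j}).toReal) with ⟨habs, _⟩ | ⟨habs, _⟩ <;>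
      rw [habs] <;> linarith [key1, key2]
  have hsup : ζ ≤ (γ + α * τ + (1 - α) * ζ) / α := by
    rw [hζdef]
    exact ciSup_le hper
  have h2 : ζ * α ≤ γ + α * τ + (1 - α) * ζ := (le_div_iff₀ hα0).mp hsup
  rw [le_div_iff₀ (by linarith : (0:ℝ) < 2 * α - 1)]
  linarith [h2]
end

section
/- Define Ψ : ℝ^d → ℝ by Ψ(w) := ∫_{−∞}^0 ∏_{j=1}^d Φ₁(t − w_j) dt, where Φ₁ is the standard normal cdf. Then for every j, ∂_j Ψ(w) = −∫_{ℝ_−^d} π_j(s) φ(s − w) ds, where ℝ_−^d = {s ∈ ℝ^d : s ≤ 0}, φ is the standard Gaussian density on ℝ^d, and π_j(s) := 1{j = argmax_{1≤k≤d} s_k} (with argmax taken as the smallest maximizing index). -/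
open MeasureTheory

/-- The standard normal density. -/
noncomputable def phi1 (t : ℝ) : ℝ := Real.exp (-t ^ 2 / 2) / Real.sqrt (2 * Real.pi)

/-- The standard normal cdf. -/
noncomputable def Phi1 (t : ℝ) : ℝ := ∫ u in Set.Iic t, phi1 u

/-- Ψ(w) := ∫_{−∞}^0 ∏_j Φ₁(t − w_j) dt. -/
noncomputable def Psi (d : ℕ) (w : Fin d → ℝ) : ℝ :=
  ∫ t in Set.Iic (0 : ℝ), ∏ j, Phi1 (t - w j)

/-- π_j(s) = 1 iff j is the smallest index at which s attains its maximum. -/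
noncomputable def piSel (d : ℕ) (j : Fin d) (s : Fin d → ℝ) : ℝ :=
  if (∀ k, s k ≤ s j) ∧ (∀ k, k < j → s k < s j) then 1 else 0






lemma phi1_eq (t : ℝ) : phi1 t = Real.exp (-(1/2) * t ^ 2) * (Real.sqrt (2 * Real.pi))⁻¹ := by
  rw [phi1, div_eq_mul_inv]; ring_nf

lemma phi1_pos (t : ℝ) : 0 < phi1 t := by
  rw [phi1_eq]
  exact mul_pos (Real.exp_pos _) (inv_pos.2 (Real.sqrt_pos.2 (by positivity)))

lemma phi1_nonneg (t : ℝ) : 0 ≤ phi1 t := (phi1_pos t).le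

lemma continuous_phi1 : Continuous phi1 := by
  simp only [funext phi1_eq]
  exact (Real.continuous_exp.comp (by continuity)).mul continuous_const

lemma integrable_phi1 : Integrable phi1 := by
  simp only [funext phi1_eq]
  exact (integrable_exp_neg_mul_sq (by norm_num)).mul_const _

lemma sqrt_two_pi_ge_one : (1:ℝ) ≤ Real.sqrt (2 * Real.pi) := by
  rw [show (1:ℝ) = Real.sqrt 1 by simp]
  apply Real.sqrt_le_sqrt
  nlinarith [Real.pi_gt_three]

lemma phi1_le_exp (t : ℝ) : phi1 t ≤ Real.exp (1/2) * Real.exp t := by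
  have h1 : phi1 t ≤ Real.exp (-t^2/2) := by
    rw [phi1]
    exact div_le_self (Real.exp_pos _).le sqrt_two_pi_ge_one
  refine h1.trans ?_
  rw [← Real.exp_add]
  apply Real.exp_le_exp.2
  nlinarith [sq_nonneg (t + 1)]

lemma Phi1_nonneg (t : ℝ) : 0 ≤ Phi1 t :=
  setIntegral_nonneg measurableSet_Iic fun x _ => phi1_nonneg x

lemma Phi1_le_exp (t : ℝ) : Phi1 t ≤ Real.exp (1/2) * Real.exp t := by
  have : Phi1 t ≤ ∫ u in Set.Iic t, Real.exp (1/2) * Real.exp u := by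
    apply setIntegral_mono_on integrable_phi1.integrableOn
      (((integrableOn_exp_Iic t).const_mul _))
      measurableSet_Iic
    exact fun x _ => phi1_le_exp x
  rw [integral_const_mul, integral_exp_Iic] at this
  exact this

noncomputable def normC : ℝ := ∫ u, phi1 u

lemma normC_pos : 0 < normC :=
  integral_pos_iff_support_of_nonneg (fun x => phi1_nonneg x) integrable_phi1 |>.2 (by
    simp only [Function.support, ne_eq]
    have : {x : ℝ | phi1 x ≠ 0} = Set.univ := Set.eq_univ_of_forall fun x => (phi1_pos x).ne'
    rw [this]; simp)

lemma Phi1_le_normC (t : ℝ) : Phi1 t ≤ normC :=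
  setIntegral_le_integral integrable_phi1 (Filter.Eventually.of_forall fun x => phi1_nonneg x)

lemma Phi1_pos (t : ℝ) : 0 < Phi1 t := by
  rw [Phi1]
  apply (setIntegral_pos_iff_support_of_nonneg_ae
    (Filter.Eventually.of_forall fun x => phi1_nonneg x)
    integrable_phi1.integrableOn).2
  have : Function.support phi1 = Set.univ := Set.eq_univ_of_forall fun x => (phi1_pos x).ne'
  rw [this, Set.univ_inter]
  simp [Real.volume_Iic]

lemma hasDerivAt_Phi1 (x : ℝ) : HasDerivAt Phi1 (phi1 x) x := by
  have key : ∀ u : ℝ, Phi1 u = Phi1 0 + ∫ s in (0:ℝ)..u, phi1 s := by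
    intro u
    rw [← intervalIntegral.integral_Iic_sub_Iic integrable_phi1.integrableOn
      integrable_phi1.integrableOn]
    rw [Phi1, Phi1]; ring
  exact (((continuous_phi1.integral_hasStrictDerivAt 0 x).hasDerivAt).const_add
    (Phi1 0)).congr_of_eventuallyEq (Filter.Eventually.of_forall key)

lemma continuous_Phi1 : Continuous Phi1 :=
  continuous_iff_continuousAt.2 fun x => (hasDerivAt_Phi1 x).continuousAt

noncomputable def normD (n : ℕ) : ℝ := (max 1 normC) ^ (n + 1)

lemma normD_pos (n : ℕ) : 0 < normD n := by
  apply pow_pos; exact lt_of_lt_of_le one_pos (le_max_left _ _)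

lemma one_le_maxC : (1:ℝ) ≤ max 1 normC := le_max_left _ _

lemma Phi1_le_normD (n : ℕ) (t : ℝ) : Phi1 t ≤ normD n := by
  refine ((Phi1_le_normC t).trans (le_max_right 1 _)).trans ?_
  exact le_self_pow₀ one_le_maxC (Nat.succ_ne_zero n)

lemma prod_Phi1_le_normD {n : ℕ} (u : Finset (Fin n)) (f : Fin n → ℝ) :
    ∏ l ∈ u, Phi1 (f l) ≤ normD n := by
  calc ∏ l ∈ u, Phi1 (f l) ≤ ∏ l ∈ u, max 1 normC := by
        apply Finset.prod_le_prod (fun l _ => Phi1_nonneg _)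
          (fun l _ => (Phi1_le_normC _).trans (le_max_right _ _))
    _ = (max 1 normC) ^ u.card := by rw [Finset.prod_const]
    _ ≤ normD n := by
        apply pow_le_pow_right₀ one_le_maxC
        have := u.card_le_univ
        simp only [Finset.card_univ, Fintype.card_fin] at this
        omega


open ContinuousLinearMap in
/-- The candidate derivative map. -/
noncomputable def Fmap (n : ℕ) (j : Fin (n+1)) (w : Fin (n+1) → ℝ) (t : ℝ) :
    (Fin (n+1) → ℝ) →L[ℝ] ℝ :=
  Phi1 (t - w j) • (∑ i : Fin n, (∏ l ∈ Finset.univ.erase i, Phi1 (t - w (j.succAbove l))) •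
      (phi1 (t - w (j.succAbove i)) • ((0 : (Fin (n+1) → ℝ) →L[ℝ] ℝ) - proj (j.succAbove i))))
  + (∏ i : Fin n, Phi1 (t - w (j.succAbove i))) •
      (phi1 (t - w j) • ((0 : (Fin (n+1) → ℝ) →L[ℝ] ℝ) - proj j))

open ContinuousLinearMap in
lemma hasFDerivAt_coord {d : ℕ} (t : ℝ) (k : Fin d) (w : Fin d → ℝ) :
    HasFDerivAt (fun w : Fin d → ℝ => Phi1 (t - w k))
      (phi1 (t - w k) • ((0 : (Fin d → ℝ) →L[ℝ] ℝ) - proj k)) w :=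
  by have h := (hasDerivAt_Phi1 (t - w k)).comp_hasFDerivAt w
      ((hasFDerivAt_const t w).fun_sub (hasFDerivAt_apply (𝕜 := ℝ) (F' := fun _ : Fin d => ℝ) k w))
     exact h

lemma hasFDerivAt_Fprod (n : ℕ) (j : Fin (n+1)) (w : Fin (n+1) → ℝ) (t : ℝ) :
    HasFDerivAt (fun w : Fin (n+1) → ℝ => ∏ k, Phi1 (t - w k)) (Fmap n j w t) w := by
  have hsplit : (fun w : Fin (n+1) → ℝ => ∏ k, Phi1 (t - w k))
      = fun w => Phi1 (t - w j) * ∏ i : Fin n, Phi1 (t - w (j.succAbove i)) :=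
    funext fun w => Fin.prod_univ_succAbove (fun k => Phi1 (t - w k)) j
  rw [hsplit, Fmap]
  exact (hasFDerivAt_coord t j w).mul
    (HasFDerivAt.finset_prod fun i _ => hasFDerivAt_coord t (j.succAbove i) w)

open ContinuousLinearMap in
lemma norm_zero_sub_proj_le {d : ℕ} (k : Fin d) :
    ‖(0 : (Fin d → ℝ) →L[ℝ] ℝ) - proj k‖ ≤ 1 := by
  rw [zero_sub, norm_neg]
  refine opNorm_le_bound _ zero_le_one fun x => ?_
  simpa using norm_le_pi_norm x k

lemma phi1_ball_bound {d : ℕ} {x w : Fin d → ℝ} (hx : x ∈ Metric.ball w 1) (t : ℝ) (k : Fin d) :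
    phi1 (t - x k) ≤ Real.exp t * Real.exp (3/2 - w k) := by
  have h1 : dist (x k) (w k) ≤ dist x w := dist_le_pi_dist x w k
  have h2 : dist x w < 1 := Metric.mem_ball.1 hx
  have h3 : w k - x k ≤ 1 := by
    rw [Real.dist_eq] at h1
    have := abs_le.1 (h1.trans h2.le)
    linarith [this.1]
  calc phi1 (t - x k) ≤ Real.exp (1/2) * Real.exp (t - x k) := phi1_le_exp _
    _ = Real.exp (1/2 + (t - x k)) := by rw [Real.exp_add]
    _ ≤ Real.exp (t + (3/2 - w k)) := by apply Real.exp_le_exp.2; linarith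
    _ = Real.exp t * Real.exp (3/2 - w k) := Real.exp_add _ _

noncomputable def Kbd (n : ℕ) (j : Fin (n+1)) (w : Fin (n+1) → ℝ) : ℝ :=
  normD n * (∑ i : Fin n, normD n * Real.exp (3/2 - w (j.succAbove i)))
    + normD n * Real.exp (3/2 - w j)

lemma norm_smul_clm {d : ℕ} (c : ℝ) (L : (Fin d → ℝ) →L[ℝ] ℝ) : ‖c • L‖ = |c| * ‖L‖ := by
  have := norm_smul c L
  simpa [Real.norm_eq_abs] using this

lemma Fmap_norm_le (n : ℕ) (j : Fin (n+1)) {w x : Fin (n+1) → ℝ}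
    (hx : x ∈ Metric.ball w 1) (t : ℝ) :
    ‖Fmap n j x t‖ ≤ Real.exp t * Kbd n j w := by
  have hsum : ‖∑ i : Fin n, (∏ l ∈ Finset.univ.erase i, Phi1 (t - x (j.succAbove l))) •
      (phi1 (t - x (j.succAbove i)) • ((0 : (Fin (n+1) → ℝ) →L[ℝ] ℝ)
        - ContinuousLinearMap.proj (j.succAbove i)))‖
      ≤ ∑ i : Fin n, normD n * (Real.exp t * Real.exp (3/2 - w (j.succAbove i))) := by
    refine (norm_sum_le _ _).trans (Finset.sum_le_sum fun i _ => ?_)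
    rw [norm_smul_clm, norm_smul_clm,
      abs_of_nonneg (Finset.prod_nonneg fun l _ => Phi1_nonneg _),
      abs_of_nonneg (phi1_nonneg _)]
    have h1 := prod_Phi1_le_normD (Finset.univ.erase i)
      (fun l => t - x (j.succAbove l))
    have h2 := phi1_ball_bound hx t (j.succAbove i)
    have h3 := norm_zero_sub_proj_le (d := n+1) (j.succAbove i)
    have h4 : (0:ℝ) ≤ phi1 (t - x (j.succAbove i)) := phi1_nonneg _
    have h5 : (0:ℝ) ≤ ∏ l ∈ Finset.univ.erase i, Phi1 (t - x (j.succAbove l)) :=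
      Finset.prod_nonneg fun l _ => Phi1_nonneg _
    have h6 : (0:ℝ) ≤ ‖(0 : (Fin (n+1) → ℝ) →L[ℝ] ℝ)
        - ContinuousLinearMap.proj (j.succAbove i)‖ := norm_nonneg _
    calc (∏ l ∈ Finset.univ.erase i, Phi1 (t - x (j.succAbove l)))
          * (phi1 (t - x (j.succAbove i)) * ‖(0 : (Fin (n+1) → ℝ) →L[ℝ] ℝ)
            - ContinuousLinearMap.proj (j.succAbove i)‖)
        ≤ normD n * ((Real.exp t * Real.exp (3/2 - w (j.succAbove i))) * 1) := by
          apply mul_le_mul h1 (mul_le_mul h2 h3 h6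
            (mul_nonneg (Real.exp_pos _).le (Real.exp_pos _).le))
            (mul_nonneg h4 h6) (normD_pos n).le
      _ = normD n * (Real.exp t * Real.exp (3/2 - w (j.succAbove i))) := by ring
  have hterm2 : ‖(∏ i : Fin n, Phi1 (t - x (j.succAbove i))) •
      (phi1 (t - x j) • ((0 : (Fin (n+1) → ℝ) →L[ℝ] ℝ) - ContinuousLinearMap.proj j))‖
      ≤ normD n * (Real.exp t * Real.exp (3/2 - w j)) := by
    rw [norm_smul_clm, norm_smul_clm,
      abs_of_nonneg (Finset.prod_nonneg fun l _ => Phi1_nonneg _),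
      abs_of_nonneg (phi1_nonneg _)]
    calc (∏ i : Fin n, Phi1 (t - x (j.succAbove i)))
        * (phi1 (t - x j) * ‖(0 : (Fin (n+1) → ℝ) →L[ℝ] ℝ) - ContinuousLinearMap.proj j‖)
        ≤ normD n * ((Real.exp t * Real.exp (3/2 - w j)) * 1) := by
          apply mul_le_mul (prod_Phi1_le_normD _ _)
            (mul_le_mul (phi1_ball_bound hx t j) (norm_zero_sub_proj_le j) (norm_nonneg _)
              (mul_nonneg (Real.exp_pos _).le (Real.exp_pos _).le))
            (mul_nonneg (phi1_nonneg _) (norm_nonneg _)) (normD_pos n).le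
      _ = normD n * (Real.exp t * Real.exp (3/2 - w j)) := by ring
  calc ‖Fmap n j x t‖ ≤ |Phi1 (t - x j)| * (∑ i : Fin n, normD n *
        (Real.exp t * Real.exp (3/2 - w (j.succAbove i))))
        + normD n * (Real.exp t * Real.exp (3/2 - w j)) := by
        rw [Fmap]
        refine (norm_add_le _ _).trans (add_le_add ?_ hterm2)
        rw [norm_smul_clm]
        exact mul_le_mul_of_nonneg_left hsum (abs_nonneg _)
    _ ≤ normD n * (∑ i : Fin n, normD n * (Real.exp t * Real.exp (3/2 - w (j.succAbove i))))
        + normD n * (Real.exp t * Real.exp (3/2 - w j)) := by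
        apply add_le_add_left
        apply mul_le_mul_of_nonneg_right _ (Finset.sum_nonneg fun i _ =>
          mul_nonneg (normD_pos n).le (mul_nonneg (Real.exp_pos _).le (Real.exp_pos _).le))
        rw [abs_of_nonneg (Phi1_nonneg _)]
        exact Phi1_le_normD n _
    _ = Real.exp t * Kbd n j w := by
        rw [Kbd, mul_add, Finset.mul_sum, Finset.mul_sum, Finset.mul_sum]
        congr 1
        · exact Finset.sum_congr rfl fun i _ => by ring
        · ring

lemma continuous_prodPhi {d : ℕ} (x : Fin d → ℝ) :
    Continuous fun t : ℝ => ∏ k, Phi1 (t - x k) :=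
  continuous_finset_prod _ fun k _ => continuous_Phi1.comp (continuous_id.sub continuous_const)

lemma exp_mul_const_integrableOn (K : ℝ) :
    IntegrableOn (fun t : ℝ => Real.exp t * K) (Set.Iic (0:ℝ)) :=
  (integrableOn_exp_Iic 0).mul_const K

lemma prodPhi_integrableOn (n : ℕ) (j : Fin (n+1)) (w : Fin (n+1) → ℝ) :
    IntegrableOn (fun t : ℝ => ∏ k, Phi1 (t - w k)) (Set.Iic (0:ℝ)) := by
  refine Integrable.mono' (exp_mul_const_integrableOn (Real.exp (1/2 - w j) * normD n))
    ((continuous_prodPhi w).aestronglyMeasurable) (Filter.Eventually.of_forall fun t => ?_)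
  rw [Real.norm_eq_abs, abs_of_nonneg (Finset.prod_nonneg fun k _ => Phi1_nonneg _)]
  calc ∏ k, Phi1 (t - w k)
      = Phi1 (t - w j) * ∏ i : Fin n, Phi1 (t - w (j.succAbove i)) :=
        Fin.prod_univ_succAbove (fun k => Phi1 (t - w k)) j
    _ ≤ (Real.exp (1/2) * Real.exp (t - w j)) * normD n := by
        apply mul_le_mul (Phi1_le_exp _) (prod_Phi1_le_normD _ _)
          (Finset.prod_nonneg fun i _ => Phi1_nonneg _)
          (mul_nonneg (Real.exp_pos _).le (Real.exp_pos _).le)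
    _ = Real.exp t * (Real.exp (1/2 - w j) * normD n) := by
        rw [← Real.exp_add, ← mul_assoc, ← Real.exp_add]; ring_nf

lemma continuous_Fmap (n : ℕ) (j : Fin (n+1)) (w : Fin (n+1) → ℝ) :
    Continuous fun t => Fmap n j w t := by
  unfold Fmap
  apply Continuous.add
  · exact ((continuous_Phi1.comp (continuous_id.sub continuous_const))).smul
      (continuous_finset_sum _ fun i _ =>
        ((continuous_finset_prod _ fun l _ =>
          continuous_Phi1.comp (continuous_id.sub continuous_const))).smul
          ((continuous_phi1.comp (continuous_id.sub continuous_const)).smul continuous_const))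
  · exact (continuous_finset_prod _ fun i _ =>
      continuous_Phi1.comp (continuous_id.sub continuous_const)).smul
      ((continuous_phi1.comp (continuous_id.sub continuous_const)).smul continuous_const)

lemma Fmap_integrableOn (n : ℕ) (j : Fin (n+1)) (w : Fin (n+1) → ℝ) :
    IntegrableOn (fun t => Fmap n j w t) (Set.Iic (0:ℝ)) := by
  refine Integrable.mono' (exp_mul_const_integrableOn (Kbd n j w))
    (continuous_Fmap n j w).aestronglyMeasurable
    (Filter.Eventually.of_forall fun t => ?_)
  exact Fmap_norm_le n j (Metric.mem_ball_self one_pos) t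

lemma partA (n : ℕ) (j : Fin (n+1)) (w : Fin (n+1) → ℝ) :
    HasFDerivAt (Psi (n+1)) (∫ t in Set.Iic (0:ℝ), Fmap n j w t) w := by
  have h := hasFDerivAt_integral_of_dominated_of_fderiv_le
    (μ := (volume : Measure ℝ).restrict (Set.Iic (0:ℝ)))
    (F := fun (x : Fin (n+1) → ℝ) (t : ℝ) => ∏ k, Phi1 (t - x k))
    (F' := fun (x : Fin (n+1) → ℝ) (t : ℝ) => Fmap n j x t)
    (x₀ := w) (bound := fun t => Real.exp t * Kbd n j w) (s := Metric.ball w 1) (Metric.ball_mem_nhds w one_pos)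
    (Filter.Eventually.of_forall fun x => (continuous_prodPhi x).aestronglyMeasurable)
    (prodPhi_integrableOn n j w)
    (continuous_Fmap n j w).aestronglyMeasurable
    (Filter.Eventually.of_forall fun t x hx => Fmap_norm_le n j hx t)
    (exp_mul_const_integrableOn _)
    (Filter.Eventually.of_forall fun t x _ => hasFDerivAt_Fprod n j x t)
  exact h

lemma partA' (n : ℕ) (j : Fin (n+1)) (w : Fin (n+1) → ℝ) :
    DifferentiableAt ℝ (Psi (n+1)) w ∧
    fderiv ℝ (Psi (n+1)) w (Pi.single j 1)
      = - ∫ t in Set.Iic (0:ℝ), phi1 (t - w j) * ∏ i : Fin n, Phi1 (t - w (j.succAbove i)) := by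
  have h := partA n j w
  refine ⟨h.differentiableAt, ?_⟩
  rw [h.fderiv]
  rw [ContinuousLinearMap.integral_apply (Fmap_integrableOn n j w)]
  rw [← integral_neg]
  refine integral_congr_ae (Filter.Eventually.of_forall fun t => ?_)
  have h1 : ∀ i : Fin n, Pi.single (M := fun _ : Fin (n+1) => ℝ) j (1:ℝ) (j.succAbove i) = 0 :=
    fun i => by
    have : j.succAbove i ≠ j := Fin.succAbove_ne j i
    simp [Pi.single_apply, this]
  simp only [Fmap, ContinuousLinearMap.add_apply, ContinuousLinearMap.smul_apply,
    ContinuousLinearMap.coe_sum', Finset.sum_apply, ContinuousLinearMap.sub_apply,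
    ContinuousLinearMap.zero_apply, ContinuousLinearMap.proj_apply, h1, Pi.single_eq_same,
    smul_eq_mul]
  simp only [zero_sub, mul_zero, mul_neg, mul_one, Finset.sum_const_zero, neg_zero]
  ring


lemma integrable_phi1_shift (c : ℝ) : Integrable (fun u => phi1 (u - c)) :=
  integrable_phi1.comp_sub_right c

lemma setIntegral_phi1_Iic (x c : ℝ) : ∫ u in Set.Iic x, phi1 (u - c) = Phi1 (x - c) := by
  have h : ∀ u : ℝ, (Set.Iic x).indicator (fun u => phi1 (u - c)) u
      = (Set.Iic (x - c)).indicator phi1 (u - c) := by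
    intro u
    by_cases h : u ≤ x
    · rw [Set.indicator_of_mem (Set.mem_Iic.2 h),
        Set.indicator_of_mem (Set.mem_Iic.2 (by linarith))]
    · rw [Set.indicator_of_notMem (fun hh => h (Set.mem_Iic.1 hh)),
        Set.indicator_of_notMem (fun hh => h (by have := Set.mem_Iic.1 hh; linarith))]
  rw [← integral_indicator measurableSet_Iic]
  simp_rw [h]
  rw [integral_sub_right_eq_self ((Set.Iic (x - c)).indicator phi1) c]
  rw [integral_indicator measurableSet_Iic]
  rfl

lemma setIntegral_phi1_Iio (x c : ℝ) : ∫ u in Set.Iio x, phi1 (u - c) = Phi1 (x - c) := by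
  rw [← setIntegral_phi1_Iic x c]
  exact setIntegral_congr_set (Iio_ae_eq_Iic)

lemma key_pointwise (n : ℕ) (j : Fin (n+1)) (w : Fin (n+1) → ℝ) (x : ℝ) (y : Fin n → ℝ) :
    Set.indicator {s : Fin (n+1) → ℝ | ∀ k, s k ≤ 0}
      (fun s => piSel (n+1) j s * ∏ k, phi1 (s k - w k)) (j.insertNth x y)
    = (Set.Iic (0:ℝ)).indicator (fun u => phi1 (u - w j)) x
      * ∏ i : Fin n, (if j.succAbove i < j then Set.Iio x else Set.Iic x).indicator
          (fun u => phi1 (u - w (j.succAbove i))) (y i) := by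
  have hsj : (j.insertNth x y : Fin (n+1) → ℝ) j = x := Fin.insertNth_apply_same (α := fun _ => ℝ) j x y
  have hsA : ∀ i : Fin n, (j.insertNth x y : Fin (n+1) → ℝ) (j.succAbove i) = y i :=
    fun i => Fin.insertNth_apply_succAbove (α := fun _ => ℝ) j x y i
  have hprod : ∏ k, phi1 ((j.insertNth x y : Fin (n+1) → ℝ) k - w k)
      = phi1 (x - w j) * ∏ i : Fin n, phi1 (y i - w (j.succAbove i)) := by
    rw [Fin.prod_univ_succAbove (fun k => phi1 ((j.insertNth x y : Fin (n+1) → ℝ) k - w k)) j,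
      hsj]
    congr 1
    exact Finset.prod_congr rfl fun i _ => by rw [hsA]
  by_cases hc : x ≤ 0 ∧ ∀ i : Fin n,
      y i ∈ (if j.succAbove i < j then Set.Iio x else Set.Iic x)
  · have hmem : j.insertNth x y ∈ {s : Fin (n+1) → ℝ | ∀ k, s k ≤ 0} := by
      refine (Fin.forall_iff_succAbove j).2 ⟨by rw [hsj]; exact hc.1, fun i => ?_⟩
      rw [hsA]
      have h2 := hc.2 i
      by_cases hlt : j.succAbove i < j
      · rw [if_pos hlt] at h2; exact le_trans (le_of_lt (Set.mem_Iio.1 h2)) hc.1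
      · rw [if_neg hlt] at h2; exact le_trans (Set.mem_Iic.1 h2) hc.1
    have hpi : piSel (n+1) j (j.insertNth x y) = 1 := by
      refine if_pos ⟨?_, ?_⟩
      · refine (Fin.forall_iff_succAbove j).2 ⟨le_rfl, fun i => ?_⟩
        rw [hsA, hsj]
        have h2 := hc.2 i
        by_cases hlt : j.succAbove i < j
        · rw [if_pos hlt] at h2; exact le_of_lt (Set.mem_Iio.1 h2)
        · rw [if_neg hlt] at h2; exact Set.mem_Iic.1 h2
      · intro k
        refine (Fin.forall_iff_succAbove j (P := fun k => k < j →
          (j.insertNth x y : Fin (n+1) → ℝ) k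
          < (j.insertNth x y : Fin (n+1) → ℝ) j)).2
          ⟨fun h => absurd h (lt_irrefl j), fun i hi => ?_⟩ k
        rw [hsA, hsj]
        have h2 := hc.2 i
        rw [if_pos hi] at h2
        exact Set.mem_Iio.1 h2
    rw [Set.indicator_of_mem hmem, hpi, one_mul, hprod,
      Set.indicator_of_mem (Set.mem_Iic.2 hc.1)]
    congr 1
    exact Finset.prod_congr rfl fun i _ =>
      (Set.indicator_of_mem (hc.2 i) (fun u => phi1 (u - w (j.succAbove i)))).symm
  · have hrhs : (Set.Iic (0:ℝ)).indicator (fun u => phi1 (u - w j)) x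
        * ∏ i : Fin n, (if j.succAbove i < j then Set.Iio x else Set.Iic x).indicator
            (fun u => phi1 (u - w (j.succAbove i))) (y i) = 0 := by
      by_cases hx : x ≤ 0
      · have : ∃ i : Fin n, y i ∉ (if j.succAbove i < j then Set.Iio x else Set.Iic x) := by
          by_contra hcon
          push_neg at hcon
          exact hc ⟨hx, hcon⟩
        obtain ⟨i, hi⟩ := this
        rw [Finset.prod_eq_zero (Finset.mem_univ i) (Set.indicator_of_notMem hi _), mul_zero]
      · rw [Set.indicator_of_notMem (fun hh => hx (Set.mem_Iic.1 hh)), zero_mul]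
    rw [hrhs]
    by_cases hmem : j.insertNth x y ∈ {s : Fin (n+1) → ℝ | ∀ k, s k ≤ 0}
    · rw [Set.indicator_of_mem hmem]
      have hx : x ≤ 0 := by have := hmem j; rwa [hsj] at this
      have hpi : piSel (n+1) j (j.insertNth x y) = 0 := by
        refine if_neg ?_
        rintro ⟨h1, h2⟩
        refine hc ⟨hx, fun i => ?_⟩
        have hle : y i ≤ x := by
          have := h1 (j.succAbove i); rwa [hsA, hsj] at this
        by_cases hlt : j.succAbove i < j
        · rw [if_pos hlt]
          have := h2 _ hlt
          rwa [hsA, hsj] at this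
        · rw [if_neg hlt]; exact Set.mem_Iic.2 hle
      rw [hpi, zero_mul]
    · rw [Set.indicator_of_notMem hmem]

lemma measurable_H (n : ℕ) (j : Fin (n+1)) (w : Fin (n+1) → ℝ) :
    Measurable (Set.indicator {s : Fin (n+1) → ℝ | ∀ k, s k ≤ 0}
      (fun s => piSel (n+1) j s * ∏ k, phi1 (s k - w k))) := by
  have hset : MeasurableSet {s : Fin (n+1) → ℝ | ∀ k, s k ≤ 0} := by
    rw [Set.setOf_forall]
    exact MeasurableSet.iInter fun k => measurableSet_le (measurable_pi_apply k) measurable_const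
  refine Measurable.indicator (Measurable.mul ?_ ?_) hset
  · unfold piSel
    refine Measurable.ite ?_ measurable_const measurable_const
    refine MeasurableSet.inter ?_ ?_
    · show MeasurableSet {s : Fin (n+1) → ℝ | ∀ k, s k ≤ s j}
      rw [Set.setOf_forall]
      exact MeasurableSet.iInter fun k =>
        measurableSet_le (measurable_pi_apply k) (measurable_pi_apply j)
    · show MeasurableSet {s : Fin (n+1) → ℝ | ∀ k, k < j → s k < s j}
      rw [Set.setOf_forall]
      refine MeasurableSet.iInter fun k => ?_
      by_cases hk : k < j
      · simp only [hk, true_implies]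
        exact measurableSet_lt (measurable_pi_apply k) (measurable_pi_apply j)
      · simp only [hk, false_implies, Set.setOf_true]
        exact MeasurableSet.univ
  · exact Finset.measurable_prod _ fun k _ =>
      continuous_phi1.measurable.comp ((measurable_pi_apply k).sub measurable_const)

lemma partB (n : ℕ) (j : Fin (n+1)) (w : Fin (n+1) → ℝ) :
    ∫ s in {s : Fin (n+1) → ℝ | ∀ k, s k ≤ 0}, piSel (n+1) j s * ∏ k, phi1 (s k - w k)
      = ∫ t in Set.Iic (0:ℝ), phi1 (t - w j) * ∏ i : Fin n, Phi1 (t - w (j.succAbove i)) := by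
  classical
  have hset : MeasurableSet {s : Fin (n+1) → ℝ | ∀ k, s k ≤ 0} := by
    rw [Set.setOf_forall]
    exact MeasurableSet.iInter fun k => measurableSet_le (measurable_pi_apply k) measurable_const
  rw [← integral_indicator hset]
  rw [← ((volume_preserving_piFinSuccAbove (fun _ : Fin (n+1) => ℝ) j).symm).integral_comp']
  have hsymm : ∀ p : ℝ × (Fin n → ℝ),
      (MeasurableEquiv.piFinSuccAbove (fun _ : Fin (n+1) => ℝ) j).symm p
        = j.insertNth p.1 p.2 := fun p => rfl
  have hGe : ∀ p : ℝ × (Fin n → ℝ),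
      Set.indicator {s : Fin (n+1) → ℝ | ∀ k, s k ≤ 0}
        (fun s => piSel (n+1) j s * ∏ k, phi1 (s k - w k))
        ((MeasurableEquiv.piFinSuccAbove (fun _ : Fin (n+1) => ℝ) j).symm p)
      = (Set.Iic (0:ℝ)).indicator (fun u => phi1 (u - w j)) p.1
        * ∏ i : Fin n, (if j.succAbove i < j then Set.Iio p.1 else Set.Iic p.1).indicator
            (fun u => phi1 (u - w (j.succAbove i))) (p.2 i) := by
    intro p
    rw [hsymm]
    exact key_pointwise n j w p.1 p.2
  rw [show (fun p : ℝ × (Fin n → ℝ) =>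
      Set.indicator {s : Fin (n+1) → ℝ | ∀ k, s k ≤ 0}
        (fun s => piSel (n+1) j s * ∏ k, phi1 (s k - w k))
        ((MeasurableEquiv.piFinSuccAbove (fun _ : Fin (n+1) => ℝ) j).symm p))
      = fun p : ℝ × (Fin n → ℝ) =>
        (Set.Iic (0:ℝ)).indicator (fun u => phi1 (u - w j)) p.1
        * ∏ i : Fin n, (if j.succAbove i < j then Set.Iio p.1 else Set.Iic p.1).indicator
            (fun u => phi1 (u - w (j.succAbove i))) (p.2 i) from funext hGe]
  -- integrability on the product space
  have hGbig : Integrable (fun p : ℝ × (Fin n → ℝ) =>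
      phi1 (p.1 - w j) * ∏ i : Fin n, phi1 (p.2 i - w (j.succAbove i)))
      ((volume : Measure ℝ).prod (volume : Measure (Fin n → ℝ))) :=
    (integrable_phi1_shift (w j)).mul_prod
      (Integrable.fintype_prod (f := fun i u => phi1 (u - w (j.succAbove i)))
        fun i => integrable_phi1_shift _)
  have hGmeas : Measurable (fun p : ℝ × (Fin n → ℝ) =>
      (Set.Iic (0:ℝ)).indicator (fun u => phi1 (u - w j)) p.1
        * ∏ i : Fin n, (if j.succAbove i < j then Set.Iio p.1 else Set.Iic p.1).indicator
            (fun u => phi1 (u - w (j.succAbove i))) (p.2 i)) := by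
    have := (measurable_H n j w).comp
      (MeasurableEquiv.piFinSuccAbove (fun _ : Fin (n+1) => ℝ) j).symm.measurable
    have heq : (Set.indicator {s : Fin (n+1) → ℝ | ∀ k, s k ≤ 0}
        (fun s => piSel (n+1) j s * ∏ k, phi1 (s k - w k)))
        ∘ (MeasurableEquiv.piFinSuccAbove (fun _ : Fin (n+1) => ℝ) j).symm
      = fun p : ℝ × (Fin n → ℝ) =>
        (Set.Iic (0:ℝ)).indicator (fun u => phi1 (u - w j)) p.1
        * ∏ i : Fin n, (if j.succAbove i < j then Set.Iio p.1 else Set.Iic p.1).indicator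
            (fun u => phi1 (u - w (j.succAbove i))) (p.2 i) := funext hGe
    rwa [heq] at this
  have hGint : Integrable (fun p : ℝ × (Fin n → ℝ) =>
      (Set.Iic (0:ℝ)).indicator (fun u => phi1 (u - w j)) p.1
        * ∏ i : Fin n, (if j.succAbove i < j then Set.Iio p.1 else Set.Iic p.1).indicator
            (fun u => phi1 (u - w (j.succAbove i))) (p.2 i))
      ((volume : Measure ℝ).prod (volume : Measure (Fin n → ℝ))) := by
    refine Integrable.mono' hGbig hGmeas.aestronglyMeasurable
      (Filter.Eventually.of_forall fun p => ?_)
    have h1 : (0:ℝ) ≤ (Set.Iic (0:ℝ)).indicator (fun u => phi1 (u - w j)) p.1 :=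
      Set.indicator_nonneg (fun u _ => phi1_nonneg _) _
    have h2 : ∀ i : Fin n, (0:ℝ) ≤ (if j.succAbove i < j then Set.Iio p.1
        else Set.Iic p.1).indicator (fun u => phi1 (u - w (j.succAbove i))) (p.2 i) :=
      fun i => Set.indicator_nonneg (fun u _ => phi1_nonneg _) _
    rw [Real.norm_eq_abs, abs_of_nonneg (mul_nonneg h1 (Finset.prod_nonneg fun i _ => h2 i))]
    refine mul_le_mul ?_ ?_ (Finset.prod_nonneg fun i _ => h2 i) (phi1_nonneg _)
    · exact Set.indicator_le_self' (fun u _ => phi1_nonneg _) p.1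
    · refine Finset.prod_le_prod (fun i _ => h2 i) fun i _ => ?_
      exact Set.indicator_le_self' (fun u _ => phi1_nonneg _) (p.2 i)
  rw [show ((volume : Measure (ℝ × (Fin n → ℝ)))) = ((volume : Measure ℝ).prod
    (volume : Measure (Fin n → ℝ))) from rfl]
  rw [integral_prod _ hGint]
  have hinner : ∀ x : ℝ,
      (∫ y : Fin n → ℝ, (Set.Iic (0:ℝ)).indicator (fun u => phi1 (u - w j)) x
        * ∏ i : Fin n, (if j.succAbove i < j then Set.Iio x else Set.Iic x).indicator
            (fun u => phi1 (u - w (j.succAbove i))) (y i))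
      = (Set.Iic (0:ℝ)).indicator (fun u => phi1 (u - w j)) x
          * ∏ i : Fin n, Phi1 (x - w (j.succAbove i)) := by
    intro x
    rw [integral_const_mul]
    congr 1
    rw [volume_pi, integral_fintype_prod_eq_prod (ι := Fin n)
      (f := fun i u => (if j.succAbove i < j then Set.Iio x else Set.Iic x).indicator
        (fun u => phi1 (u - w (j.succAbove i))) u)]
    refine Finset.prod_congr rfl fun i _ => ?_
    by_cases hlt : j.succAbove i < j
    · simp only [if_pos hlt]
      rw [integral_indicator measurableSet_Iio]
      exact setIntegral_phi1_Iio x _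
    · simp only [if_neg hlt]
      rw [integral_indicator measurableSet_Iic]
      exact setIntegral_phi1_Iic x _
  rw [show (fun x : ℝ => ∫ y : Fin n → ℝ, (Set.Iic (0:ℝ)).indicator (fun u => phi1 (u - w j)) x
        * ∏ i : Fin n, (if j.succAbove i < j then Set.Iio x else Set.Iic x).indicator
            (fun u => phi1 (u - w (j.succAbove i))) (y i))
      = fun x : ℝ => (Set.Iic (0:ℝ)).indicator (fun u => phi1 (u - w j)) x
          * ∏ i : Fin n, Phi1 (x - w (j.succAbove i)) from funext hinner]
  rw [← integral_indicator measurableSet_Iic]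
  congr 1
  funext x
  by_cases hx : x ≤ 0
  · rw [Set.indicator_of_mem (Set.mem_Iic.2 hx), Set.indicator_of_mem (Set.mem_Iic.2 hx)]
  · rw [Set.indicator_of_notMem (fun hh => hx (Set.mem_Iic.1 hh)),
      Set.indicator_of_notMem (fun hh => hx (Set.mem_Iic.1 hh)), zero_mul]

/-- ∂_j Ψ(w) = −∫_{ℝ_−^d} π_j(s) φ(s − w) ds, where φ is the standard
Gaussian density on ℝ^d. -/
theorem stmt8 {d : ℕ} (j : Fin d) (w : Fin d → ℝ) :
    DifferentiableAt ℝ (Psi d) w ∧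
    fderiv ℝ (Psi d) w (Pi.single j 1)
      = - ∫ s in {s : Fin d → ℝ | ∀ k, s k ≤ 0},
          piSel d j s * ∏ k, phi1 (s k - w k) := by
  have hd : 0 < d := j.pos
  obtain ⟨n, rfl⟩ : ∃ n, d = n + 1 := ⟨d - 1, by omega⟩
  obtain ⟨hdiff, hfd⟩ := partA' n j w
  refine ⟨hdiff, ?_⟩
  rw [hfd, ← partB n j w]
end

section
/- Let X_1,…,X_n be independent random vectors in ℝ^d (d ≥ 2) with nonnegative coordinates. Set Z := max_{1≤j≤d} Σ_{i=1}^n X_{ij} and M := max_{i,j} X_{ij}. Then E[Z] ≤ C (max_j E[Σ_i X_{ij}] + E[M] log d) for a universal constant C. -/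
open MeasureTheory ProbabilityTheory

lemma aux_exp_le_linear {s : ℝ} (h0 : 0 ≤ s) (h1 : s ≤ 1) :
    Real.exp s ≤ 1 + (Real.exp 1 - 1) * s := by
  have h := convexOn_exp.2 (Set.mem_univ (0:ℝ)) (Set.mem_univ (1:ℝ))
    (by linarith : (0:ℝ) ≤ 1 - s) h0 (by ring)
  simp only [smul_eq_mul, mul_zero, mul_one, zero_add, Real.exp_zero] at h
  calc Real.exp s = Real.exp ((1-s)*0 + s*1) := by norm_num
    _ ≤ (1-s) * 1 + s * Real.exp 1 := by
        have h := convexOn_exp.2 (Set.mem_univ (0:ℝ)) (Set.mem_univ (1:ℝ))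
          (by linarith : (0:ℝ) ≤ 1 - s) h0 (by ring)
        simpa [Real.exp_zero] using h
    _ = 1 + (Real.exp 1 - 1) * s := by ring

lemma aux_min_add_max (x τ : ℝ) : min x τ + max (x - τ) 0 = x := by
  rcases le_total x τ with h | h
  · simp [min_eq_left h, max_eq_right (by linarith : x - τ ≤ 0)]
  · simp [min_eq_right h, max_eq_left (by linarith : 0 ≤ x - τ)]

lemma aux_prod_integral {Ω : Type} [MeasurableSpace Ω] {μ : Measure Ω} [IsProbabilityMeasure μ]
    {n : ℕ} {g : Fin n → Ω → ℝ}
    (hindep : iIndepFun g μ)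
    (hmeas : ∀ i, Measurable (g i)) (hint : ∀ i, Integrable (g i) μ) (s : Finset (Fin n)) :
    Integrable (fun ω => ∏ i ∈ s, g i ω) μ ∧
      ∫ ω, ∏ i ∈ s, g i ω ∂μ = ∏ i ∈ s, ∫ ω, g i ω ∂μ := by
  classical
  induction s using Finset.induction_on with
  | empty => simp
  | insert _ _ ha ih =>
    rename_i a s'
    have hI : IndepFun (g a) (fun ω => ∏ i ∈ s', g i ω) μ := by
      have := hindep.indepFun_finsetProd_of_notMem hmeas ha
      have he : (∏ j ∈ s', g j) = fun ω => ∏ i ∈ s', g i ω := by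
        funext ω; simp [Finset.prod_apply]
      rw [he] at this
      exact this.symm
    have hmul : Integrable (fun ω => g a ω * ∏ i ∈ s', g i ω) μ :=
      hI.integrable_mul (hint a) ih.1
    constructor
    · simpa [Finset.prod_insert ha] using hmul
    · have := hI.integral_mul_eq_mul_integral (hint a).aestronglyMeasurable ih.1.aestronglyMeasurable
      simp only [Finset.prod_insert ha]
      calc ∫ ω, g a ω * ∏ i ∈ s', g i ω ∂μ
          = ∫ ω, (g a * fun ω => ∏ i ∈ s', g i ω) ω ∂μ := by rfl
        _ = (∫ ω, g a ω ∂μ) * ∫ ω, ∏ i ∈ s', g i ω ∂μ := this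
        _ = (∫ ω, g a ω ∂μ) * ∏ i ∈ s', ∫ ω, g i ω ∂μ := by rw [ih.2]

set_option maxHeartbeats 1600000 in
/-- Maximal inequality for nonnegative summands.  There is a universal
constant C such that for independent random vectors X_1,…,X_n in ℝ^d (d ≥ 2) with
nonnegative coordinates, with Z = max_j Σ_i X_{ij} and M = max_{i,j} X_{ij},
E[Z] ≤ C(max_j E[Σ_i X_{ij}] + E[M] log d). -/
theorem stmt13 :
    ∃ C : ℝ, 0 < C ∧
      ∀ (n d : ℕ), 2 ≤ d →
      ∀ (Ω : Type) (_ : MeasurableSpace Ω) (μ : Measure Ω), IsProbabilityMeasure μ →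
      ∀ (X : Fin n → Ω → Fin d → ℝ), (∀ i, Measurable (X i)) →
      iIndepFun X μ →
      (∀ i ω j, 0 ≤ X i ω j) →
      (∀ i j, Integrable (fun ω => X i ω j) μ) →
      Integrable (fun ω => ⨆ i, ⨆ j, X i ω j) μ →
      Integrable (fun ω => ⨆ j, ∑ i, X i ω j) μ →
        ∫ ω, (⨆ j, ∑ i, X i ω j) ∂μ
          ≤ C * ((⨆ j, ∑ i, ∫ ω, X i ω j ∂μ)
              + (∫ ω, (⨆ i, ⨆ j, X i ω j) ∂μ) * Real.log d) := by
  classical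
  refine ⟨5, by norm_num, ?_⟩
  intro n d hd Ω mΩ μ hμ X hXm hXindep hX0 hXint hMint hZint
  haveI : IsProbabilityMeasure μ := hμ
  haveI : Nonempty (Fin d) := ⟨⟨0, by omega⟩⟩
  -- basic objects
  set η : Fin n → Ω → ℝ := fun i ω => ⨆ j, X i ω j with hη_def
  set Mf : Ω → ℝ := fun ω => ⨆ i, η i ω with hMf_def
  set m : ℝ := ∫ ω, Mf ω ∂μ with hm_def
  set μmax : ℝ := ⨆ j, ∑ i, ∫ ω, X i ω j ∂μ with hμmax_def
  -- bddAbove facts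
  have hbddη : ∀ i ω, BddAbove (Set.range fun j => X i ω j) :=
    fun i ω => Finite.bddAbove_range _
  have hbddM : ∀ ω, BddAbove (Set.range fun i => η i ω) :=
    fun ω => Finite.bddAbove_range _
  have hη0 : ∀ i ω, 0 ≤ η i ω := fun i ω => Real.iSup_nonneg (fun j => hX0 i ω j)
  have hXleη : ∀ i ω j, X i ω j ≤ η i ω := fun i ω j => le_ciSup (hbddη i ω) j
  have hηleM : ∀ i ω, η i ω ≤ Mf ω := fun i ω => le_ciSup (hbddM ω) i
  have hM0 : ∀ ω, 0 ≤ Mf ω := fun ω => Real.iSup_nonneg (fun i => hη0 i ω)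
  have hηleSum : ∀ i ω, η i ω ≤ ∑ j, X i ω j := fun i ω =>
    ciSup_le (fun j => Finset.single_le_sum (fun j _ => hX0 i ω j) (Finset.mem_univ j))
  -- measurability
  have hXmj : ∀ i j, Measurable fun ω => X i ω j :=
    fun i j => (measurable_pi_apply j).comp (hXm i)
  have hηm : ∀ i, Measurable (η i) := fun i => Measurable.iSup (fun j => hXmj i j)
  have hMm : Measurable Mf := Measurable.iSup hηm
  -- integrability
  have hηint : ∀ i, Integrable (η i) μ := by
    intro i
    refine Integrable.mono' (g := fun ω => ∑ j, X i ω j)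
      (integrable_finset_sum _ (fun j _ => hXint i j))
      (hηm i).aestronglyMeasurable (ae_of_all _ (fun ω => ?_))
    rw [Real.norm_eq_abs, abs_of_nonneg (hη0 i ω)]
    exact hηleSum i ω
  have hm0 : 0 ≤ m := integral_nonneg (fun ω => hM0 ω)
  have hμmax_ge : ∀ j, ∑ i, ∫ ω, X i ω j ∂μ ≤ μmax := fun j => by
    rw [hμmax_def]
    exact le_ciSup (f := fun j => ∑ i, ∫ ω, X i ω j ∂μ) (Finite.bddAbove_range _) j
  have hμmax0 : 0 ≤ μmax := by
    refine le_trans ?_ (hμmax_ge ⟨0, by omega⟩)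
    exact Finset.sum_nonneg (fun i _ => integral_nonneg (fun ω => hX0 i ω _))
  have hlogd : Real.log 2 ≤ Real.log d := by
    apply Real.log_le_log (by norm_num)
    exact_mod_cast hd
  have hlog2 : (0.6931471803 : ℝ) < Real.log 2 := Real.log_two_gt_d9
  rcases eq_or_lt_of_le hm0 with hm | hm
  · -- degenerate case m = 0
    have hZle : ∫ ω, (⨆ j, ∑ i, X i ω j) ∂μ ≤ (n : ℝ) * m := by
      have : ∫ ω, (⨆ j, ∑ i, X i ω j) ∂μ ≤ ∫ ω, (n : ℝ) * Mf ω ∂μ := by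
        refine integral_mono hZint (hMint.const_mul _) (fun ω => ?_)
        refine ciSup_le (fun j => ?_)
        calc ∑ i, X i ω j ≤ ∑ _i : Fin n, Mf ω :=
              Finset.sum_le_sum (fun i _ => (hXleη i ω j).trans (hηleM i ω))
          _ = (n : ℝ) * Mf ω := by simp [mul_comm]
      simpa [integral_const_mul] using this
    rw [← hm] at hZle
    simp only [mul_zero] at hZle
    nlinarith [hlogd, hlog2]
  · -- main case
    set τ : ℝ := 2 * m with hτ_def
    have hτ0 : 0 < τ := by positivity
    -- truncation pieces
    set φ : Fin n → Ω → ℝ := fun i ω => max (η i ω - τ) 0 with hφ_def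
    set gi : Fin n → Ω → ℝ := fun k ω => if η k ω ≤ τ then 1 else 0 with hgi_def
    set q : Fin n → ℝ := fun k => ∫ ω, gi k ω ∂μ with hq_def
    set a : Fin n → ℝ := fun i => ∫ ω, φ i ω ∂μ with ha_def
    have hφm : ∀ i, Measurable (φ i) := fun i =>
      ((hηm i).sub measurable_const).max measurable_const
    have hφ0 : ∀ i ω, 0 ≤ φ i ω := fun i ω => le_max_right _ _
    have hφleη : ∀ i ω, φ i ω ≤ η i ω := fun i ω => by
      have h1 := hη0 i ω
      exact max_le (by linarith) h1
    have hφint : ∀ i, Integrable (φ i) μ := by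
      intro i
      refine Integrable.mono' (hηint i) (hφm i).aestronglyMeasurable
        (ae_of_all _ (fun ω => ?_))
      rw [Real.norm_eq_abs, abs_of_nonneg (hφ0 i ω)]
      exact hφleη i ω
    have hgim : ∀ k, Measurable (gi k) := fun k =>
      Measurable.ite (measurableSet_le (hηm k) measurable_const)
        measurable_const measurable_const
    have hgi0 : ∀ k ω, 0 ≤ gi k ω := by
      intro k ω; simp only [hgi_def]; split <;> norm_num
    have hgi1 : ∀ k ω, gi k ω ≤ 1 := by
      intro k ω; simp only [hgi_def]; split <;> norm_num
    have hgiint : ∀ k, Integrable (gi k) μ := by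
      intro k
      refine Integrable.mono' (integrable_const (1:ℝ))
        (hgim k).aestronglyMeasurable (ae_of_all _ (fun ω => ?_))
      rw [Real.norm_eq_abs, abs_of_nonneg (hgi0 k ω)]
      exact hgi1 k ω
    -- measurable functions on the codomain
    have hFηm : Measurable (fun x : Fin d → ℝ => ⨆ j, x j) :=
      Measurable.iSup (fun j => measurable_pi_apply j)
    have hFindm : Measurable (fun x : Fin d → ℝ => if (⨆ j, x j) ≤ τ then (1:ℝ) else 0) :=
      Measurable.ite (measurableSet_le hFηm measurable_const)
        measurable_const measurable_const
    have hFposm : Measurable (fun x : Fin d → ℝ => max ((⨆ j, x j) - τ) 0) :=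
      (hFηm.sub measurable_const).max measurable_const
    -- independence of the indicator family
    have hgiindep : iIndepFun gi μ := by
      have := hXindep.comp
        (fun _ : Fin n => fun x : Fin d → ℝ => if (⨆ j, x j) ≤ τ then (1:ℝ) else 0)
        (fun _ => hFindm)
      exact this
    have hprod_ind := aux_prod_integral hgiindep hgim hgiint Finset.univ
    have hq0 : ∀ k, 0 ≤ q k := fun k => integral_nonneg (fun ω => hgi0 k ω)
    have hq1 : ∀ k, q k ≤ 1 := by
      intro k
      have : q k ≤ ∫ _ω, (1:ℝ) ∂μ :=
        integral_mono (hgiint k) (integrable_const 1) (fun ω => hgi1 k ω)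
      simpa using this
    have hhalf : (1/2 : ℝ) ≤ ∏ k, q k := by
      have h2 : ∫ ω, (1 - Mf ω / τ) ∂μ ≤ ∫ ω, ∏ k, gi k ω ∂μ := by
        refine integral_mono ((integrable_const (1:ℝ)).sub (hMint.div_const τ))
          hprod_ind.1 (fun ω => ?_)
        by_cases hall : ∀ k, η k ω ≤ τ
        · have : ∏ k, gi k ω = 1 :=
            Finset.prod_eq_one (fun k _ => by simp [hgi_def, hall k])
          rw [this]
          have : 0 ≤ Mf ω / τ := div_nonneg (hM0 ω) hτ0.le
          linarith
        · push_neg at hall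
          obtain ⟨k0, hk0⟩ := hall
          have hz : ∏ k, gi k ω = 0 :=
            Finset.prod_eq_zero (Finset.mem_univ k0) (by simp [hgi_def, hk0, not_le.mpr hk0])
          rw [hz]
          have h1 : (1:ℝ) ≤ Mf ω / τ :=
            (one_le_div hτ0).mpr ((le_of_lt hk0).trans (hηleM k0 ω))
          linarith
      have h3 : ∫ ω, (1 - Mf ω / τ) ∂μ = 1 - m / τ := by
        rw [integral_sub (integrable_const 1) (hMint.div_const τ)]
        simp [integral_div, hm_def]
      have h4 : (1:ℝ) - m / τ = 1/2 := by
        rw [hτ_def]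
        field_simp
        ring
      rw [h3, h4] at h2
      calc (1/2 : ℝ) ≤ ∫ ω, ∏ k, gi k ω ∂μ := h2
        _ = ∏ k, q k := hprod_ind.2
    have hPi : ∀ i, (1/2 : ℝ) ≤ ∏ k ∈ Finset.univ.erase i, q k := by
      intro i
      have he : q i * ∏ k ∈ Finset.univ.erase i, q k = ∏ k, q k :=
        Finset.mul_prod_erase Finset.univ q (Finset.mem_univ i)
      have hP0 : 0 ≤ ∏ k ∈ Finset.univ.erase i, q k :=
        Finset.prod_nonneg (fun k _ => hq0 k)
      nlinarith [hq1 i, hq0 i, hhalf]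
    -- product formula for the mixed family
    have hA : ∀ i : Fin n,
        Integrable (fun ω => φ i ω * ∏ k ∈ Finset.univ.erase i, gi k ω) μ ∧
        ∫ ω, φ i ω * ∏ k ∈ Finset.univ.erase i, gi k ω ∂μ
          = a i * ∏ k ∈ Finset.univ.erase i, q k := by
      intro i
      set G : Fin n → Ω → ℝ := fun k => if k = i then φ k else gi k with hG_def
      have hGindep : iIndepFun G μ := by
        have := hXindep.comp
          (fun k : Fin n => if k = i then (fun x : Fin d → ℝ => max ((⨆ j, x j) - τ) 0)
            else (fun x : Fin d → ℝ => if (⨆ j, x j) ≤ τ then (1:ℝ) else 0))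
          (fun k => by
            by_cases hk : k = i
            · simpa [hk] using hFposm
            · simpa [hk] using hFindm)
        convert this using 2 with k
        by_cases hk : k = i <;> simp [hG_def, hk] <;> rfl
      have hGm : ∀ k, Measurable (G k) := by
        intro k; simp only [hG_def]; split <;> [exact hφm k; exact hgim k]
      have hGint : ∀ k, Integrable (G k) μ := by
        intro k; simp only [hG_def]; split <;> [exact hφint k; exact hgiint k]
      have hp := aux_prod_integral hGindep hGm hGint Finset.univ
      have hGe : ∀ ω, ∏ k, G k ω = φ i ω * ∏ k ∈ Finset.univ.erase i, gi k ω := by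
        intro ω
        rw [← Finset.mul_prod_erase Finset.univ (fun k => G k ω) (Finset.mem_univ i)]
        congr 1
        · simp [hG_def]
        · refine Finset.prod_congr rfl (fun k hk => ?_)
          have : k ≠ i := (Finset.mem_erase.mp hk).1
          simp [hG_def, this]
      have hGe' : ∏ k, ∫ ω, G k ω ∂μ = a i * ∏ k ∈ Finset.univ.erase i, q k := by
        rw [← Finset.mul_prod_erase Finset.univ (fun k => ∫ ω, G k ω ∂μ) (Finset.mem_univ i)]
        congr 1
        · simp [hG_def, ha_def]
        · refine Finset.prod_congr rfl (fun k hk => ?_)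
          have : k ≠ i := (Finset.mem_erase.mp hk).1
          simp [hG_def, this, hq_def]
      constructor
      · have := hp.1
        simp only [hGe] at this
        exact this
      · have := hp.2
        simp only [hGe] at this
        rw [this, hGe']
    have ha0 : ∀ i, 0 ≤ a i := fun i => integral_nonneg (fun ω => hφ0 i ω)
    have hsum_a : ∑ i, a i ≤ 2 * m := by
      have hstep : ∀ i : Fin n, a i ≤ 2 * ∫ ω, φ i ω * ∏ k ∈ Finset.univ.erase i, gi k ω ∂μ := by
        intro i
        rw [(hA i).2]
        nlinarith [hPi i, ha0 i]
      calc ∑ i, a i ≤ ∑ i, 2 * ∫ ω, φ i ω * ∏ k ∈ Finset.univ.erase i, gi k ω ∂μ :=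
            Finset.sum_le_sum (fun i _ => hstep i)
        _ = 2 * ∫ ω, ∑ i, φ i ω * ∏ k ∈ Finset.univ.erase i, gi k ω ∂μ := by
            rw [← Finset.mul_sum, integral_finset_sum _ (fun i _ => (hA i).1)]
        _ ≤ 2 * ∫ ω, Mf ω ∂μ := by
            have hC : ∀ ω, ∑ i, φ i ω * ∏ k ∈ Finset.univ.erase i, gi k ω ≤ Mf ω := by
              intro ω
              by_cases hex : ∃ i0, τ < η i0 ω
              · obtain ⟨i0, hi0⟩ := hex
                by_cases hall : ∀ k, k ≠ i0 → η k ω ≤ τ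
                · have hsum : ∑ i, φ i ω * ∏ k ∈ Finset.univ.erase i, gi k ω
                      = φ i0 ω * ∏ k ∈ Finset.univ.erase i0, gi k ω := by
                    refine Finset.sum_eq_single i0 (fun i _ hi => ?_) (by simp)
                    have hz : φ i ω = 0 := max_eq_right (sub_nonpos.mpr (hall i hi))
                    rw [hz, zero_mul]
                  rw [hsum]
                  have hP1 : ∏ k ∈ Finset.univ.erase i0, gi k ω ≤ 1 :=
                    Finset.prod_le_one (fun k _ => hgi0 k ω) (fun k _ => hgi1 k ω)
                  have hφle : φ i0 ω ≤ Mf ω := by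
                    have h1 := hηleM i0 ω
                    have h2 := hM0 ω
                    exact max_le (by linarith) h2
                  calc φ i0 ω * ∏ k ∈ Finset.univ.erase i0, gi k ω
                      ≤ φ i0 ω * 1 := mul_le_mul_of_nonneg_left hP1 (hφ0 i0 ω)
                    _ ≤ Mf ω := by rw [mul_one]; exact hφle
                · push_neg at hall
                  obtain ⟨k1, hk1ne, hk1⟩ := hall
                  have hzero : ∀ i, φ i ω * ∏ k ∈ Finset.univ.erase i, gi k ω = 0 := by
                    intro i
                    rcases le_or_gt (η i ω) τ with h | h
                    · have hz : φ i ω = 0 := max_eq_right (sub_nonpos.mpr h)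
                      rw [hz, zero_mul]
                    · have hk' : ∃ k', k' ≠ i ∧ τ < η k' ω := by
                        by_cases hi : i = i0
                        · exact ⟨k1, by rw [hi]; exact hk1ne, hk1⟩
                        · exact ⟨i0, fun hcon => hi hcon.symm, hi0⟩
                      obtain ⟨k', hk'i, hk'lt⟩ := hk'
                      have hz : ∏ k ∈ Finset.univ.erase i, gi k ω = 0 :=
                        Finset.prod_eq_zero
                          (Finset.mem_erase.mpr ⟨hk'i, Finset.mem_univ k'⟩)
                          (if_neg (not_le.mpr hk'lt))
                      rw [hz, mul_zero]
                  rw [Finset.sum_eq_zero (fun i _ => hzero i)]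
                  exact hM0 ω
              · push_neg at hex
                have hzero : ∀ i, φ i ω * ∏ k ∈ Finset.univ.erase i, gi k ω = 0 := fun i => by
                  have hz : φ i ω = 0 := max_eq_right (sub_nonpos.mpr (hex i))
                  rw [hz, zero_mul]
                rw [Finset.sum_eq_zero (fun i _ => hzero i)]
                exact hM0 ω
            have hintsum : Integrable (fun ω => ∑ i, φ i ω * ∏ k ∈ Finset.univ.erase i, gi k ω) μ :=
              integrable_finset_sum _ (fun i _ => (hA i).1)
            have := integral_mono hintsum hMint hC
            linarith
        _ = 2 * m := by rw [hm_def]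
    -- Part 2: mgf bound for the truncated sums
    set e1 : ℝ := Real.exp 1 with he1_def
    have he1lt : e1 < 2.7182818286 := Real.exp_one_lt_d9
    have he1gt : 2.7182818283 < e1 := Real.exp_one_gt_d9
    set Y : Fin n → Fin d → Ω → ℝ := fun i j ω => min (X i ω j) τ with hY_def
    set T : Fin d → Ω → ℝ := fun j ω => ∑ i, Y i j ω with hT_def
    have hY0 : ∀ i j ω, 0 ≤ Y i j ω := fun i j ω => le_min (hX0 i ω j) hτ0.le
    have hYτ : ∀ i j ω, Y i j ω ≤ τ := fun i j ω => min_le_right _ _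
    have hYX : ∀ i j ω, Y i j ω ≤ X i ω j := fun i j ω => min_le_left _ _
    have hYm : ∀ i j, Measurable (Y i j) := fun i j => (hXmj i j).min measurable_const
    have hYint : ∀ i j, Integrable (Y i j) μ := by
      intro i j
      refine Integrable.mono' (hXint i j) (hYm i j).aestronglyMeasurable
        (ae_of_all _ (fun ω => ?_))
      rw [Real.norm_eq_abs, abs_of_nonneg (hY0 i j ω)]
      exact hYX i j ω
    set W : Fin d → Ω → ℝ := fun j ω => ∏ i, Real.exp (Y i j ω / τ) with hW_def
    have hexpm : ∀ i j, Measurable fun ω => Real.exp (Y i j ω / τ) := fun i j =>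
      Real.measurable_exp.comp ((hYm i j).div_const τ)
    have hexpint : ∀ i j, Integrable (fun ω => Real.exp (Y i j ω / τ)) μ := by
      intro i j
      refine Integrable.mono' (integrable_const e1) (hexpm i j).aestronglyMeasurable
        (ae_of_all _ (fun ω => ?_))
      rw [Real.norm_eq_abs, abs_of_nonneg (Real.exp_nonneg _)]
      exact Real.exp_le_exp.mpr ((div_le_one hτ0).mpr (hYτ i j ω))
    have hWprod : ∀ j, Integrable (W j) μ ∧
        ∫ ω, W j ω ∂μ = ∏ i, ∫ ω, Real.exp (Y i j ω / τ) ∂μ := by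
      intro j
      have hindepj : iIndepFun
          (fun i ω => Real.exp (Y i j ω / τ)) μ := by
        have := hXindep.comp
          (fun _ : Fin n => fun x : Fin d → ℝ => Real.exp (min (x j) τ / τ))
          (fun _ => by fun_prop)
        exact this
      exact aux_prod_integral hindepj (fun i => hexpm i j) (fun i => hexpint i j) Finset.univ
    have hintW : ∀ j, ∫ ω, W j ω ∂μ ≤ Real.exp ((e1 - 1) * μmax / τ) := by
      intro j
      rw [(hWprod j).2]
      have hfac : ∀ i, ∫ ω, Real.exp (Y i j ω / τ) ∂μ
          ≤ Real.exp ((e1 - 1) * (∫ ω, Y i j ω ∂μ) / τ) := by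
        intro i
        have h1 : ∫ ω, Real.exp (Y i j ω / τ) ∂μ
            ≤ ∫ ω, (1 + (e1 - 1) * (Y i j ω / τ)) ∂μ := by
          refine integral_mono (hexpint i j)
            ((integrable_const (1:ℝ)).add (((hYint i j).div_const τ).const_mul (e1 - 1)))
            (fun ω => ?_)
          exact aux_exp_le_linear (div_nonneg (hY0 i j ω) hτ0.le)
            ((div_le_one hτ0).mpr (hYτ i j ω))
        have h2 : ∫ ω, (1 + (e1 - 1) * (Y i j ω / τ)) ∂μ
            = 1 + (e1 - 1) * ((∫ ω, Y i j ω ∂μ) / τ) := by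
          rw [integral_add (integrable_const 1)
            (((hYint i j).div_const τ).const_mul (e1 - 1)), integral_const_mul,
            integral_div]
          simp
        have h3 : 1 + (e1 - 1) * ((∫ ω, Y i j ω ∂μ) / τ)
            ≤ Real.exp ((e1 - 1) * (∫ ω, Y i j ω ∂μ) / τ) := by
          have := Real.add_one_le_exp ((e1 - 1) * (∫ ω, Y i j ω ∂μ) / τ)
          rw [mul_div_assoc] at this ⊢
          linarith
        linarith
      calc ∏ i, ∫ ω, Real.exp (Y i j ω / τ) ∂μ
          ≤ ∏ i, Real.exp ((e1 - 1) * (∫ ω, Y i j ω ∂μ) / τ) :=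
            Finset.prod_le_prod
              (fun i _ => integral_nonneg (fun ω => Real.exp_nonneg _))
              (fun i _ => hfac i)
        _ = Real.exp (∑ i, (e1 - 1) * (∫ ω, Y i j ω ∂μ) / τ) := (Real.exp_sum _ _).symm
        _ ≤ Real.exp ((e1 - 1) * μmax / τ) := by
            apply Real.exp_le_exp.mpr
            have hsY : ∑ i, ∫ ω, Y i j ω ∂μ ≤ μmax := by
              refine le_trans (Finset.sum_le_sum (fun i _ => ?_)) (hμmax_ge j)
              exact integral_mono (hYint i j) (hXint i j) (fun ω => hYX i j ω)
            have he10 : (0:ℝ) ≤ e1 - 1 := by norm_num at he1gt ⊢; linarith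
            calc ∑ i, (e1 - 1) * (∫ ω, Y i j ω ∂μ) / τ
                = (e1 - 1) * (∑ i, ∫ ω, Y i j ω ∂μ) / τ := by
                  rw [← Finset.sum_div, ← Finset.mul_sum]
              _ ≤ (e1 - 1) * μmax / τ := by
                  exact (div_le_div_iff_of_pos_right hτ0).mpr (mul_le_mul_of_nonneg_left hsY he10)
    set c : ℝ := d * Real.exp ((e1 - 1) * μmax / τ) with hc_def
    have hd0 : (0:ℝ) < d := by
      have : (2:ℝ) ≤ d := by exact_mod_cast hd
      linarith
    have hc0 : (0:ℝ) < c := by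
      rw [hc_def]; positivity
    have hsumW : ∑ j, ∫ ω, W j ω ∂μ ≤ c := by
      calc ∑ j, ∫ ω, W j ω ∂μ ≤ ∑ _j : Fin d, Real.exp ((e1 - 1) * μmax / τ) :=
            Finset.sum_le_sum (fun j _ => hintW j)
        _ = c := by rw [hc_def]; simp [mul_comm]
    have hWpos : ∀ j ω, 0 < W j ω := fun j ω =>
      Finset.prod_pos (fun i _ => Real.exp_pos _)
    have hsumWpos : ∀ ω, 0 < ∑ j, W j ω := fun ω =>
      Finset.sum_pos (fun j _ => hWpos j ω) Finset.univ_nonempty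
    -- pointwise log-sum-exp bound
    have hkey : ∀ ω, (⨆ j, T j ω) ≤ τ * ((∑ j, W j ω) / c - 1 + Real.log c) := by
      intro ω
      refine ciSup_le (fun j => ?_)
      have hWexp : W j ω = Real.exp (T j ω / τ) := by
        show (∏ i, Real.exp (Y i j ω / τ)) = Real.exp ((∑ i, Y i j ω) / τ)
        rw [← Real.exp_sum, Finset.sum_div]
      have h1 : T j ω / τ = Real.log (W j ω) := by rw [hWexp, Real.log_exp]
      have h2 : Real.log (W j ω) ≤ Real.log (∑ j', W j' ω) :=
        Real.log_le_log (hWpos j ω)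
          (Finset.single_le_sum (fun j' _ => (hWpos j' ω).le) (Finset.mem_univ j))
      have h3 : Real.log (∑ j', W j' ω) = Real.log ((∑ j', W j' ω) / c) + Real.log c := by
        rw [Real.log_div (ne_of_gt (hsumWpos ω)) (ne_of_gt hc0)]
        ring
      have h4 : Real.log ((∑ j', W j' ω) / c) ≤ (∑ j', W j' ω) / c - 1 :=
        Real.log_le_sub_one_of_pos (div_pos (hsumWpos ω) hc0)
      have h5 : T j ω / τ ≤ (∑ j', W j' ω) / c - 1 + Real.log c := by
        rw [h1]; linarith
      calc T j ω = τ * (T j ω / τ) := by field_simp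
        _ ≤ τ * ((∑ j', W j' ω) / c - 1 + Real.log c) :=
            mul_le_mul_of_nonneg_left h5 hτ0.le
    -- integrability of sup of truncated sums
    have hTm : ∀ j, Measurable (T j) := fun j =>
      Finset.measurable_sum _ (fun i _ => hYm i j)
    have hTsupm : Measurable (fun ω => ⨆ j, T j ω) := Measurable.iSup hTm
    have hT0 : ∀ j ω, 0 ≤ T j ω := fun j ω => Finset.sum_nonneg (fun i _ => hY0 i j ω)
    have hTsupint : Integrable (fun ω => ⨆ j, T j ω) μ := by
      refine Integrable.mono' (integrable_const ((n : ℝ) * τ))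
        hTsupm.aestronglyMeasurable (ae_of_all _ (fun ω => ?_))
      rw [Real.norm_eq_abs, abs_of_nonneg (Real.iSup_nonneg (fun j => hT0 j ω))]
      refine ciSup_le (fun j => ?_)
      calc T j ω ≤ ∑ _i : Fin n, τ := Finset.sum_le_sum (fun i _ => hYτ i j ω)
        _ = (n : ℝ) * τ := by simp [mul_comm]
    have hWsumint : Integrable (fun ω => ∑ j, W j ω) μ :=
      integrable_finset_sum _ (fun j _ => (hWprod j).1)
    have hRHSint : Integrable (fun ω => τ * ((∑ j, W j ω) / c - 1 + Real.log c)) μ :=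
      (((hWsumint.div_const c).sub (integrable_const 1)).add
        (integrable_const (Real.log c))).const_mul τ
    have hRHSeq : ∫ ω, τ * ((∑ j, W j ω) / c - 1 + Real.log c) ∂μ
        = τ / c * (∑ j, ∫ ω, W j ω ∂μ) + τ * (Real.log c - 1) := by
      have heq : (fun ω => τ * ((∑ j, W j ω) / c - 1 + Real.log c))
          = fun ω => (τ / c) * (∑ j, W j ω) + τ * (Real.log c - 1) := by
        funext ω; field_simp; ring
      rw [heq, integral_add (hWsumint.const_mul _) (integrable_const _),
        integral_const_mul, integral_finset_sum _ (fun j _ => (hWprod j).1), integral_const]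
      simp
    have hTsup_le : ∫ ω, (⨆ j, T j ω) ∂μ ≤ τ * Real.log c := by
      have h6 : ∫ ω, (⨆ j, T j ω) ∂μ ≤ ∫ ω, τ * ((∑ j, W j ω) / c - 1 + Real.log c) ∂μ :=
        integral_mono hTsupint hRHSint hkey
      rw [hRHSeq] at h6
      have h7 : τ / c * (∑ j, ∫ ω, W j ω ∂μ) ≤ τ / c * c :=
        mul_le_mul_of_nonneg_left hsumW (by positivity)
      have h8 : τ / c * c = τ := div_mul_cancel₀ τ (ne_of_gt hc0)
      linarith
    have hlogc : Real.log c = Real.log d + (e1 - 1) * μmax / τ := by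
      rw [hc_def, Real.log_mul (ne_of_gt hd0) (Real.exp_ne_zero _), Real.log_exp]
    have hTsup_le' : ∫ ω, (⨆ j, T j ω) ∂μ ≤ τ * Real.log d + (e1 - 1) * μmax := by
      rw [hlogc] at hTsup_le
      have h9 : τ * ((e1 - 1) * μmax / τ) = (e1 - 1) * μmax := by
        field_simp
      calc ∫ ω, (⨆ j, T j ω) ∂μ ≤ τ * (Real.log d + (e1 - 1) * μmax / τ) := hTsup_le
        _ = τ * Real.log d + (e1 - 1) * μmax := by rw [mul_add, h9]
    -- Part 3: combine
    have hDint : Integrable (fun ω => ∑ i, φ i ω) μ :=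
      integrable_finset_sum _ (fun i _ => hφint i)
    have hpt : ∀ ω, (⨆ j, ∑ i, X i ω j) ≤ (⨆ j', T j' ω) + ∑ i, φ i ω := by
      intro ω
      refine ciSup_le (fun j => ?_)
      have h1 : ∀ i, X i ω j ≤ Y i j ω + φ i ω := by
        intro i
        have hmm := aux_min_add_max (X i ω j) τ
        have h2 : max (X i ω j - τ) 0 ≤ φ i ω :=
          max_le_max (sub_le_sub_right (hXleη i ω j) τ) le_rfl
        have h3 : Y i j ω = min (X i ω j) τ := rfl
        rw [h3]
        linarith
      have h4 : ∑ i, X i ω j ≤ T j ω + ∑ i, φ i ω := by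
        calc ∑ i, X i ω j ≤ ∑ i, (Y i j ω + φ i ω) := Finset.sum_le_sum (fun i _ => h1 i)
          _ = T j ω + ∑ i, φ i ω := by rw [Finset.sum_add_distrib]
      have h5 : T j ω ≤ ⨆ j', T j' ω :=
        le_ciSup (f := fun j' => T j' ω) (Finite.bddAbove_range _) j
      linarith
    have hZle : ∫ ω, (⨆ j, ∑ i, X i ω j) ∂μ
        ≤ ∫ ω, (⨆ j, T j ω) ∂μ + ∑ i, a i := by
      calc ∫ ω, (⨆ j, ∑ i, X i ω j) ∂μ
          ≤ ∫ ω, ((⨆ j', T j' ω) + ∑ i, φ i ω) ∂μ :=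
            integral_mono hZint (hTsupint.add hDint) hpt
        _ = ∫ ω, (⨆ j, T j ω) ∂μ + ∫ ω, ∑ i, φ i ω ∂μ := integral_add hTsupint hDint
        _ = ∫ ω, (⨆ j, T j ω) ∂μ + ∑ i, a i := by
            rw [integral_finset_sum _ (fun i _ => hφint i)]
    -- final numeric combination
    have hfin : ∫ ω, (⨆ j, ∑ i, X i ω j) ∂μ
        ≤ τ * Real.log d + (e1 - 1) * μmax + 2 * m := by linarith
    rw [hτ_def] at hfin
    have hld : (2:ℝ)/3 < Real.log d :=
      lt_of_lt_of_le (by norm_num : (2:ℝ)/3 < 0.6931471803) (le_trans hlog2.le hlogd)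
    have h2m : 2 * m ≤ 3 * (m * Real.log d) := by
      have h := mul_le_mul_of_nonneg_left hld.le hm.le
      nlinarith
    have hμm : (e1 - 1) * μmax ≤ 5 * μmax := by
      nlinarith [mul_nonneg (show (0:ℝ) ≤ 6 - e1 by linarith) hμmax0]
    linarith
end
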